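/- arXiv:1803.07494 — 7 statements merged into one kernel-verified Lean document; each statement's English description precedes it below -/
import Mathlib

section
/- Let (X, μ) be a σ-finite measure space, let q ≥ 2 be real and p = q/(q−1). Let α : X → [0,∞) be measurable with α ∈ L^∞(μ) ∩ L^p(μ), and let f : ℝ → ℝ be continuous with |f(t)| ≤ β(1 + |t|^{q−1}) for all t ∈ ℝ, where β > 0. Then for every w ∈ L^q(μ) the function α·(f∘w) belongs to L^p(μ), and the map w ↦ α·(f∘w) is continuous from L^q(μ) to L^p(μ): if w_j → w in L^q(μ) then α·f(w_j) → α·f(w) in L^p(μ). -/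
open MeasureTheory Filter
open scoped ENNReal NNReal

section aux
variable {X : Type*} [MeasurableSpace X] {μ : Measure X}

lemma memLp_alpha_rpow {q : ℝ} (hq : 2 ≤ q)
    {α : X → ℝ} (hα_top : MemLp α ⊤ μ)
    {w : X → ℝ} (hw : MemLp w (ENNReal.ofReal q) μ) :
    MemLp (fun σ => α σ * |w σ| ^ (q - 1)) (ENNReal.ofReal (q / (q - 1))) μ := by
  have hq1 : (1:ℝ) < q := by linarith
  have h1 : MemLp (fun σ => |w σ| ^ (q - 1)) (ENNReal.ofReal (q / (q - 1))) μ := by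
    have h := hw.norm_rpow_div (ENNReal.ofReal (q - 1))
    rw [ENNReal.toReal_ofReal (by linarith)] at h
    rw [ENNReal.ofReal_div_of_pos (by linarith)]
    simpa [Real.norm_eq_abs] using h
  have h2 := MemLp.smul (r := ENNReal.ofReal (q / (q - 1))) h1 hα_top
  exact h2

lemma mem_nem {q : ℝ} (hq : 2 ≤ q)
    {α : X → ℝ} (hα_meas : Measurable α) (hα_nonneg : ∀ σ, 0 ≤ α σ)
    (hα_top : MemLp α ⊤ μ) (hα_p : MemLp α (ENNReal.ofReal (q / (q - 1))) μ)
    {f : ℝ → ℝ} (hf_cont : Continuous f)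
    {β : ℝ} (hβ_pos : 0 < β) (hβ : ∀ t : ℝ, |f t| ≤ β * (1 + |t| ^ (q - 1)))
    {w : X → ℝ} (hw : MemLp w (ENNReal.ofReal q) μ) :
    MemLp (fun σ => α σ * f (w σ)) (ENNReal.ofReal (q / (q - 1))) μ := by
  have hmeas : AEStronglyMeasurable (fun σ => α σ * f (w σ)) μ :=
    hα_meas.aestronglyMeasurable.mul
      (hf_cont.comp_aestronglyMeasurable hw.aestronglyMeasurable)
  have hg : MemLp (fun σ => α σ + α σ * |w σ| ^ (q - 1)) (ENNReal.ofReal (q / (q - 1))) μ :=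
    hα_p.add (memLp_alpha_rpow hq hα_top hw)
  refine MemLp.of_le_mul (c := β) hg hmeas (Filter.Eventually.of_forall fun σ => ?_)
  have h1 : |f (w σ)| ≤ β * (1 + |w σ| ^ (q - 1)) := hβ (w σ)
  have h2 : 0 ≤ α σ := hα_nonneg σ
  have h3 : (0:ℝ) ≤ |w σ| ^ (q - 1) := Real.rpow_nonneg (abs_nonneg _) _
  have h4 : ‖α σ * f (w σ)‖ = α σ * |f (w σ)| := by
    rw [Real.norm_eq_abs, abs_mul, abs_of_nonneg h2]
  have h5 : ‖α σ + α σ * |w σ| ^ (q - 1)‖ = α σ + α σ * |w σ| ^ (q - 1) := by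
    rw [Real.norm_eq_abs, abs_of_nonneg (by positivity)]
  rw [h4, h5]
  nlinarith [mul_le_mul_of_nonneg_left h1 h2]

lemma nem_tendsto {q : ℝ} (hq : 2 ≤ q)
    {α : X → ℝ} (hα_meas : Measurable α) (hα_nonneg : ∀ σ, 0 ≤ α σ)
    (hα_top : MemLp α ⊤ μ) (hα_p : MemLp α (ENNReal.ofReal (q / (q - 1))) μ)
    {f : ℝ → ℝ} (hf_cont : Continuous f)
    {β : ℝ} (hβ_pos : 0 < β) (hβ : ∀ t : ℝ, |f t| ≤ β * (1 + |t| ^ (q - 1)))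
    {w G : X → ℝ} (hw : MemLp w (ENNReal.ofReal q) μ) (hG : MemLp G (ENNReal.ofReal q) μ)
    {u : ℕ → X → ℝ} (hu : ∀ k, AEStronglyMeasurable (u k) μ)
    (h_ae : ∀ᵐ σ ∂μ, Tendsto (fun k => u k σ) atTop (nhds (w σ)))
    (h_dom : ∀ᵐ σ ∂μ, ∀ k, |u k σ| ≤ G σ) :
    Tendsto (fun k => eLpNorm (fun σ => α σ * f (u k σ) - α σ * f (w σ))
      (ENNReal.ofReal (q / (q - 1))) μ) atTop (nhds 0) := by
  have hq1 : (1:ℝ) < q := by linarith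
  set p : ℝ := q / (q - 1) with hp_def
  have hp_pos : 0 < p := div_pos (by linarith) (by linarith)
  have hp1 : 1 ≤ p := by
    rw [hp_def, le_div_iff₀ (by linarith)]; linarith
  have hP0 : ENNReal.ofReal p ≠ 0 := by
    simp [ENNReal.ofReal_eq_zero, not_le, hp_pos]
  have hPtop : ENNReal.ofReal p ≠ ⊤ := ENNReal.ofReal_ne_top
  have hPtoReal : (ENNReal.ofReal p).toReal = p := ENNReal.toReal_ofReal hp_pos.le
  -- the dominating function
  set B : X → ℝ := fun σ => β * ((α σ + α σ * |G σ| ^ (q - 1)) + (α σ + α σ * |w σ| ^ (q - 1)))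
    with hB_def
  have hB_mem : MemLp B (ENNReal.ofReal p) μ := by
    refine MemLp.const_mul ?_ β
    exact (hα_p.add (memLp_alpha_rpow hq hα_top hG)).add
      (hα_p.add (memLp_alpha_rpow hq hα_top hw))
  have hB_int : (∫⁻ σ, (‖B σ‖₊ : ℝ≥0∞) ^ p ∂μ) ≠ ⊤ := by
    have h := hB_mem.eLpNorm_lt_top
    rw [eLpNorm_eq_lintegral_rpow_enorm_toReal hP0 hPtop, hPtoReal] at h
    simp only [enorm_eq_nnnorm] at h
    intro hcon
    rw [hcon, one_div, ENNReal.top_rpow_of_pos (inv_pos.2 hp_pos)] at h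
    exact lt_irrefl _ h
  -- the functions
  set F : ℕ → X → ℝ≥0∞ := fun k σ =>
    (‖α σ * f (u k σ) - α σ * f (w σ)‖₊ : ℝ≥0∞) ^ p with hF_def
  have hF_meas : ∀ k, AEMeasurable (F k) μ := by
    intro k
    have h1 : AEStronglyMeasurable (fun σ => α σ * f (u k σ) - α σ * f (w σ)) μ :=
      (hα_meas.aestronglyMeasurable.mul (hf_cont.comp_aestronglyMeasurable (hu k))).sub
        (hα_meas.aestronglyMeasurable.mul
          (hf_cont.comp_aestronglyMeasurable hw.aestronglyMeasurable))
    exact (ENNReal.continuous_rpow_const.measurable).comp_aemeasurable h1.enorm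
  have h_bound : ∀ k, F k ≤ᵐ[μ] fun σ => (‖B σ‖₊ : ℝ≥0∞) ^ p := by
    intro k
    filter_upwards [h_dom] with σ hσ
    have h2 : 0 ≤ α σ := hα_nonneg σ
    have h3 : |u k σ| ^ (q - 1) ≤ |G σ| ^ (q - 1) := by
      apply Real.rpow_le_rpow (abs_nonneg _) ((hσ k).trans (le_abs_self _)) (by linarith)
    have hreal : ‖α σ * f (u k σ) - α σ * f (w σ)‖ ≤ ‖B σ‖ := by
      have h4 : |f (u k σ)| ≤ β * (1 + |u k σ| ^ (q - 1)) := hβ _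
      have h5 : |f (w σ)| ≤ β * (1 + |w σ| ^ (q - 1)) := hβ _
      have h6 : (0:ℝ) ≤ |u k σ| ^ (q - 1) := Real.rpow_nonneg (abs_nonneg _) _
      have h7 : (0:ℝ) ≤ |w σ| ^ (q - 1) := Real.rpow_nonneg (abs_nonneg _) _
      have h8 : (0:ℝ) ≤ |G σ| ^ (q - 1) := Real.rpow_nonneg (abs_nonneg _) _
      have hBnn : 0 ≤ B σ := by
        simp only [hB_def]; positivity
      rw [Real.norm_eq_abs, Real.norm_eq_abs, abs_of_nonneg hBnn]
      calc |α σ * f (u k σ) - α σ * f (w σ)|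
          ≤ |α σ * f (u k σ)| + |α σ * f (w σ)| := abs_sub _ _
        _ = α σ * |f (u k σ)| + α σ * |f (w σ)| := by
            rw [abs_mul, abs_mul, abs_of_nonneg h2]
        _ ≤ B σ := by
            simp only [hB_def]
            nlinarith [mul_le_mul_of_nonneg_left h4 h2, mul_le_mul_of_nonneg_left h5 h2,
              mul_le_mul_of_nonneg_left h3 (mul_nonneg hβ_pos.le h2)]
    rw [hF_def]
    exact ENNReal.rpow_le_rpow (by exact_mod_cast hreal) hp_pos.le
  have h_lim : ∀ᵐ σ ∂μ, Tendsto (fun k => F k σ) atTop (nhds 0) := by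
    filter_upwards [h_ae] with σ hσ
    have h1 : Tendsto (fun k => α σ * f (u k σ) - α σ * f (w σ)) atTop (nhds 0) := by
      have := ((hf_cont.tendsto _).comp hσ).const_mul (α σ)
      simpa using this.sub_const (α σ * f (w σ))
    have h2 : Tendsto (fun k => (‖α σ * f (u k σ) - α σ * f (w σ)‖₊ : ℝ≥0∞)) atTop (nhds 0) := by
      rw [← ENNReal.coe_zero]
      exact ENNReal.tendsto_coe.2 (by simpa [nnnorm_zero] using h1.nnnorm)
    have h3 := ((ENNReal.continuous_rpow_const (y := p)).tendsto 0).comp h2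
    rw [ENNReal.zero_rpow_of_pos hp_pos] at h3
    exact h3
  have hDCT := tendsto_lintegral_of_dominated_convergence' _ hF_meas h_bound hB_int h_lim
  rw [lintegral_zero] at hDCT
  have hfinal := ((ENNReal.continuous_rpow_const (y := 1/p)).tendsto 0).comp hDCT
  have : Tendsto (fun k => (∫⁻ σ, F k σ ∂μ) ^ (1 / p)) atTop (nhds 0) := by
    rw [ENNReal.zero_rpow_of_pos (by positivity)] at hfinal
    exact hfinal
  have heq : ∀ k, eLpNorm (fun σ => α σ * f (u k σ) - α σ * f (w σ)) (ENNReal.ofReal p) μ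
      = (∫⁻ σ, F k σ ∂μ) ^ (1 / p) := fun k => by
    rw [eLpNorm_eq_lintegral_rpow_enorm_toReal hP0 hPtop, hPtoReal, hF_def]
    simp only [enorm_eq_nnnorm]
  simpa only [heq] using this

lemma aux_lintegral_Lp_finsum_le {p : ℝ} (hp1 : 1 ≤ p) {F : ℕ → X → ℝ≥0∞}
    (hF : ∀ k, AEMeasurable (F k) μ) (n : ℕ) :
    (∫⁻ σ, (∑ k ∈ Finset.range n, F k σ) ^ p ∂μ) ^ (1/p)
      ≤ ∑ k ∈ Finset.range n, (∫⁻ σ, F k σ ^ p ∂μ) ^ (1/p) := by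
  have hp_pos : (0:ℝ) < p := by linarith
  induction n with
  | zero =>
      simp [ENNReal.zero_rpow_of_pos hp_pos, ENNReal.zero_rpow_of_pos (by positivity : (0:ℝ) < 1/p)]
      exact hp_pos
  | succ n ih =>
      have hSn : AEMeasurable (fun σ => ∑ k ∈ Finset.range n, F k σ) μ :=
        Finset.aemeasurable_fun_sum _ fun k _ => hF k
      have h1 : (∫⁻ σ, (∑ k ∈ Finset.range (n+1), F k σ) ^ p ∂μ) ^ (1/p)
          ≤ (∫⁻ σ, (∑ k ∈ Finset.range n, F k σ) ^ p ∂μ) ^ (1/p)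
            + (∫⁻ σ, F n σ ^ p ∂μ) ^ (1/p) := by
        have h := ENNReal.lintegral_Lp_add_le hSn (hF n) hp1 (μ := μ)
        have heq : (fun σ => (∑ k ∈ Finset.range (n+1), F k σ) ^ p)
            = fun σ => (((fun σ => ∑ k ∈ Finset.range n, F k σ) + F n) σ) ^ p := by
          funext σ
          simp [Finset.sum_range_succ]
        rw [show (∫⁻ σ, (∑ k ∈ Finset.range (n+1), F k σ) ^ p ∂μ)
            = ∫⁻ σ, (((fun σ => ∑ k ∈ Finset.range n, F k σ) + F n) σ) ^ p ∂μ from by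
          rw [heq]]
        exact h
      refine h1.trans ?_
      rw [Finset.sum_range_succ]
      exact add_le_add_left ih _

end aux

/-- On a σ-finite measure space `(X, μ)`, with `q ≥ 2`, `p = q/(q-1)`,
`α ≥ 0` in `L^∞ ∩ L^p`, and `f` continuous with `|f(t)| ≤ β (1 + |t|^(q-1))`:
for every `w ∈ L^q(μ)` the function `α · (f ∘ w)` lies in `L^p(μ)`, and the Nemytskii
map `w ↦ α · (f ∘ w)` is (sequentially) continuous from `L^q(μ)` to `L^p(μ)`. -/

theorem stmt_8 {X : Type*} [MeasurableSpace X] (μ : Measure X) [SigmaFinite μ]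
    (q : ℝ) (hq : 2 ≤ q)
    (α : X → ℝ) (hα_meas : Measurable α) (hα_nonneg : ∀ σ, 0 ≤ α σ)
    (hα_top : MemLp α ⊤ μ) (hα_p : MemLp α (ENNReal.ofReal (q / (q - 1))) μ)
    (f : ℝ → ℝ) (hf_cont : Continuous f)
    (β : ℝ) (hβ_pos : 0 < β) (hβ : ∀ t : ℝ, |f t| ≤ β * (1 + |t| ^ (q - 1))) :
    (∀ w : X → ℝ, MemLp w (ENNReal.ofReal q) μ →
        MemLp (fun σ => α σ * f (w σ)) (ENNReal.ofReal (q / (q - 1))) μ) ∧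
    (∀ (w : X → ℝ) (wj : ℕ → X → ℝ), MemLp w (ENNReal.ofReal q) μ →
        (∀ j, MemLp (wj j) (ENNReal.ofReal q) μ) →
        Tendsto (fun j => eLpNorm (fun σ => wj j σ - w σ) (ENNReal.ofReal q) μ)
          atTop (nhds 0) →
        Tendsto (fun j => eLpNorm (fun σ => α σ * f (wj j σ) - α σ * f (w σ))
            (ENNReal.ofReal (q / (q - 1))) μ) atTop (nhds 0)) := by
  have hq1 : (1:ℝ) < q := by linarith
  have hq_pos : (0:ℝ) < q := by linarith
  have hQ0 : ENNReal.ofReal q ≠ 0 := by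
    simp only [ne_eq, ENNReal.ofReal_eq_zero, not_le]; linarith
  have hQtop : ENNReal.ofReal q ≠ ⊤ := ENNReal.ofReal_ne_top
  have hQtoReal : (ENNReal.ofReal q).toReal = q := ENNReal.toReal_ofReal (by linarith)
  refine ⟨fun w hw => mem_nem hq hα_meas hα_nonneg hα_top hα_p hf_cont hβ_pos hβ hw, ?_⟩
  intro w wj hw hwj htends
  apply Filter.tendsto_of_subseq_tendsto
  intro ns hns
  have h2 : Tendsto (fun k => eLpNorm (fun σ => wj (ns k) σ - w σ) (ENNReal.ofReal q) μ)
      atTop (nhds 0) := htends.comp hns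
  obtain ⟨φ, hφmono, hφ⟩ :=
    Filter.extraction_forall_of_eventually
      (P := fun n k => eLpNorm (fun σ => wj (ns k) σ - w σ) (ENNReal.ofReal q) μ ≤ 2⁻¹ ^ n)
      (fun n => (h2.eventually_lt_const
        (ENNReal.pow_pos (ENNReal.inv_pos.2 ENNReal.ofNat_ne_top) n)).mono fun k hk => hk.le)
  set u : ℕ → X → ℝ := fun k => wj (ns (φ k)) with hu_def
  have hu : ∀ k, AEStronglyMeasurable (u k) μ := fun k => (hwj (ns (φ k))).aestronglyMeasurable
  -- the lintegral form of the eLpNorm bounds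
  have hek : ∀ k, (∫⁻ σ, (‖u k σ - w σ‖₊ : ℝ≥0∞) ^ q ∂μ) ^ (1/q) ≤ 2⁻¹ ^ k := by
    intro k
    have h := hφ k
    rwa [eLpNorm_eq_lintegral_rpow_enorm_toReal hQ0 hQtop, hQtoReal] at h
  -- the series of differences
  set S : X → ℝ≥0∞ := fun σ => ∑' k, (‖u k σ - w σ‖₊ : ℝ≥0∞) with hS_def
  have hdm : ∀ k, AEMeasurable (fun σ => (‖u k σ - w σ‖₊ : ℝ≥0∞)) μ :=
    fun k => ((hu k).sub hw.aestronglyMeasurable).enorm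
  have hS_meas : AEMeasurable S μ := AEMeasurable.ennreal_tsum hdm
  -- L^q bound on S via Fatou and Minkowski
  have hSn_bound : ∀ n, (∫⁻ σ, (∑ k ∈ Finset.range n, (‖u k σ - w σ‖₊ : ℝ≥0∞)) ^ q ∂μ)
      ≤ 2 ^ q := by
    intro n
    have h1 := aux_lintegral_Lp_finsum_le (by linarith : (1:ℝ) ≤ q) hdm n
    have h2 : ∑ k ∈ Finset.range n, (∫⁻ σ, (‖u k σ - w σ‖₊ : ℝ≥0∞) ^ q ∂μ) ^ (1/q)
        ≤ (2 : ℝ≥0∞) := by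
      calc ∑ k ∈ Finset.range n, (∫⁻ σ, (‖u k σ - w σ‖₊ : ℝ≥0∞) ^ q ∂μ) ^ (1/q)
          ≤ ∑ k ∈ Finset.range n, (2:ℝ≥0∞)⁻¹ ^ k := Finset.sum_le_sum fun k _ => hek k
        _ ≤ ∑' k, (2:ℝ≥0∞)⁻¹ ^ k := ENNReal.sum_le_tsum _
        _ = 2 := by
            rw [ENNReal.tsum_geometric, ENNReal.one_sub_inv_two, inv_inv]
    have h3 : (∫⁻ σ, (∑ k ∈ Finset.range n, (‖u k σ - w σ‖₊ : ℝ≥0∞)) ^ q ∂μ) ^ (1/q)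
        ≤ (2 : ℝ≥0∞) := h1.trans h2
    have h4 := ENNReal.rpow_le_rpow h3 hq_pos.le
    rwa [← ENNReal.rpow_mul, one_div, inv_mul_cancel₀ hq_pos.ne', ENNReal.rpow_one] at h4
  have hSq : (∫⁻ σ, S σ ^ q ∂μ) ≤ 2 ^ q := by
    have hpt : ∀ σ, S σ ^ q
        = liminf (fun n => (∑ k ∈ Finset.range n, (‖u k σ - w σ‖₊ : ℝ≥0∞)) ^ q) atTop := by
      intro σ
      have ht : Tendsto (fun n => ∑ k ∈ Finset.range n, (‖u k σ - w σ‖₊ : ℝ≥0∞))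
          atTop (nhds (S σ)) := ENNReal.tendsto_nat_tsum _
      have ht2 := ((ENNReal.continuous_rpow_const (y := q)).tendsto (S σ)).comp ht
      exact ht2.liminf_eq.symm
    calc (∫⁻ σ, S σ ^ q ∂μ)
        = ∫⁻ σ, liminf (fun n =>
            (∑ k ∈ Finset.range n, (‖u k σ - w σ‖₊ : ℝ≥0∞)) ^ q) atTop ∂μ := by
          exact lintegral_congr fun σ => hpt σ
      _ ≤ liminf (fun n => ∫⁻ σ,
            (∑ k ∈ Finset.range n, (‖u k σ - w σ‖₊ : ℝ≥0∞)) ^ q ∂μ) atTop := by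
          refine lintegral_liminf_le' fun n => ?_
          exact (ENNReal.continuous_rpow_const.measurable).comp_aemeasurable
            (Finset.aemeasurable_fun_sum _ fun k _ => hdm k)
      _ ≤ 2 ^ q := liminf_le_of_frequently_le' (Frequently.of_forall hSn_bound)
  have hS_fin : ∀ᵐ σ ∂μ, S σ < ⊤ := by
    have h2q : (2:ℝ≥0∞) ^ q < ⊤ := ENNReal.rpow_lt_top_of_nonneg hq_pos.le ENNReal.ofNat_ne_top
    have h1 : ∀ᵐ σ ∂μ, S σ ^ q < ⊤ :=
      ae_lt_top' ((ENNReal.continuous_rpow_const.measurable).comp_aemeasurable hS_meas)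
        (lt_of_le_of_lt hSq h2q).ne
    filter_upwards [h1] with σ hσ
    exact (ENNReal.rpow_lt_top_iff_of_pos hq_pos).1 hσ
  -- the dominating function
  set G : X → ℝ := fun σ => (S σ).toReal + ‖w σ‖ with hG_def
  have hG_mem : MemLp G (ENNReal.ofReal q) μ := by
    have hT : MemLp (fun σ => (S σ).toReal) (ENNReal.ofReal q) μ := by
      refine ⟨hS_meas.ennreal_toReal.aestronglyMeasurable, ?_⟩
      rw [eLpNorm_eq_lintegral_rpow_enorm_toReal hQ0 hQtop, hQtoReal]
      have hle : (∫⁻ σ, (‖(S σ).toReal‖₊ : ℝ≥0∞) ^ q ∂μ) ≤ ∫⁻ σ, S σ ^ q ∂μ := by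
        refine lintegral_mono fun σ => ?_
        refine ENNReal.rpow_le_rpow ?_ hq_pos.le
        rw [← enorm_eq_nnnorm, Real.enorm_eq_ofReal ENNReal.toReal_nonneg]
        exact ENNReal.ofReal_toReal_le
      have h2q : (2:ℝ≥0∞) ^ q < ⊤ := ENNReal.rpow_lt_top_of_nonneg hq_pos.le ENNReal.ofNat_ne_top
      exact ENNReal.rpow_lt_top_of_nonneg (by positivity) (lt_of_le_of_lt (hle.trans hSq) h2q).ne
    exact hT.add hw.norm
  -- a.e. domination
  have h_dom : ∀ᵐ σ ∂μ, ∀ k, |u k σ| ≤ G σ := by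
    filter_upwards [hS_fin] with σ hσ
    intro k
    have h1 : ‖u k σ - w σ‖ ≤ (S σ).toReal := by
      have hle := ENNReal.le_tsum (f := fun k => (‖u k σ - w σ‖₊ : ℝ≥0∞)) k
      have h2 := ENNReal.toReal_mono hσ.ne hle
      simpa using h2
    calc |u k σ| = ‖(u k σ - w σ) + w σ‖ := by rw [Real.norm_eq_abs]; ring_nf
      _ ≤ ‖u k σ - w σ‖ + ‖w σ‖ := norm_add_le _ _
      _ ≤ (S σ).toReal + ‖w σ‖ := add_le_add_left h1 _
  -- a.e. convergence
  have h_ae : ∀ᵐ σ ∂μ, Tendsto (fun k => u k σ) atTop (nhds (w σ)) := by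
    filter_upwards [hS_fin] with σ hσ
    have h0 : Tendsto (fun k => (‖u k σ - w σ‖₊ : ℝ≥0∞)) atTop (nhds 0) :=
      ENNReal.tendsto_atTop_zero_of_tsum_ne_top hσ.ne
    have h1 : Tendsto (fun k => ‖u k σ - w σ‖) atTop (nhds 0) := by
      have h2 := (ENNReal.tendsto_toReal (a := 0) (by simp)).comp h0
      simpa [Function.comp_def] using h2
    exact tendsto_iff_norm_sub_tendsto_zero.2 h1
  exact ⟨φ, nem_tendsto hq hα_meas hα_nonneg hα_top hα_p hf_cont hβ_pos hβ hw hG_mem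
    hu h_ae h_dom⟩
end

section
/- Let σ₀ ∈ ℝ^d (d ≥ 1), 0 < r < ρ and ε ∈ [1/2, 1), and let w : ℝ^d → ℝ be defined by w(x) = min{1, max{0, (r − | ‖x − σ₀‖ − ρ |)/((1−ε)r)}}. Then w is Lipschitz, hence differentiable almost everywhere; its gradient satisfies ‖∇w(x)‖ ≤ 1/((1−ε)r) for almost every x and ∇w(x) = 0 for almost every x outside A_r^ρ(σ₀) ∖ A_{εr}^ρ(σ₀); and ∫_{ℝ^d} ( ‖∇w(x)‖² + w(x)² ) dx ≤ ( 1 + 1/((1−ε)²r²) ) · vol(A_r^ρ(σ₀)), where vol denotes Lebesgue measure. -/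
open MeasureTheory

/-- Let `σ₀ ∈ ℝ^d` (`d ≥ 1`), `0 < r < ρ`, `ε ∈ [1/2, 1)` and
`w(x) = min{1, max{0, (r − |‖x−σ₀‖ − ρ|)/((1−ε)r)}}`. Then `w` is Lipschitz, hence
differentiable a.e.; its gradient satisfies `‖∇w‖ ≤ 1/((1−ε)r)` a.e. and `∇w = 0`
a.e. outside `A_r^ρ(σ₀) ∖ A_{εr}^ρ(σ₀)`; and
`∫ (‖∇w‖² + w²) ≤ (1 + 1/((1−ε)²r²)) · vol(A_r^ρ(σ₀))`.
(Here `gradient w x = 0` automatically at points of non-differentiability.) -/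
theorem stmt_10 (d : ℕ) (hd : 1 ≤ d) (σ₀ : EuclideanSpace ℝ (Fin d)) (r ρ ε : ℝ)
    (hr : 0 < r) (hrρ : r < ρ) (hε : ε ∈ Set.Ico (1 / 2 : ℝ) 1)
    (w : EuclideanSpace ℝ (Fin d) → ℝ)
    (hw : ∀ x, w x = min 1 (max 0 ((r - |‖x - σ₀‖ - ρ|) / ((1 - ε) * r)))) :
    (∃ K : NNReal, LipschitzWith K w) ∧
    (∀ᵐ x ∂volume, DifferentiableAt ℝ w x) ∧
    (∀ᵐ x ∂volume, ‖gradient w x‖ ≤ 1 / ((1 - ε) * r)) ∧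
    (∀ᵐ x ∂volume,
      x ∉ {y : EuclideanSpace ℝ (Fin d) | ρ - r < ‖y - σ₀‖ ∧ ‖y - σ₀‖ < r + ρ} \
          {y : EuclideanSpace ℝ (Fin d) | ρ - ε * r < ‖y - σ₀‖ ∧ ‖y - σ₀‖ < ε * r + ρ} →
        gradient w x = 0) ∧
    ∫ x, (‖gradient w x‖ ^ 2 + w x ^ 2) ∂volume ≤
      (1 + 1 / ((1 - ε) ^ 2 * r ^ 2)) *
        (volume {y : EuclideanSpace ℝ (Fin d) |
          ρ - r < ‖y - σ₀‖ ∧ ‖y - σ₀‖ < r + ρ}).toReal := by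
  haveI : Nonempty (Fin d) := ⟨⟨0, hd⟩⟩
  obtain ⟨hε₁, hε₂⟩ := hε
  set c : ℝ := (1 - ε) * r with hc_def
  have hc : 0 < c := mul_pos (by linarith) hr
  set K : NNReal := Real.toNNReal (1 / c) with hK_def
  have hKc : (K : ℝ) = 1 / c := Real.coe_toNNReal _ (by positivity)
  -- Lipschitz
  have hlipw : LipschitzWith K w := by
    apply LipschitzWith.of_dist_le_mul
    intro x y
    rw [hw x, hw y, Real.dist_eq, hKc]
    have h1 : |min 1 (max 0 ((r - |‖x - σ₀‖ - ρ|) / c)) -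
        min 1 (max 0 ((r - |‖y - σ₀‖ - ρ|) / c))| ≤
        |max 0 ((r - |‖x - σ₀‖ - ρ|) / c) - max 0 ((r - |‖y - σ₀‖ - ρ|) / c)| := by
      refine le_trans (abs_min_sub_min_le_max _ _ _ _) ?_
      simp
    have h2 : |max 0 ((r - |‖x - σ₀‖ - ρ|) / c) - max 0 ((r - |‖y - σ₀‖ - ρ|) / c)| ≤
        |(r - |‖x - σ₀‖ - ρ|) / c - (r - |‖y - σ₀‖ - ρ|) / c| := by
      refine le_trans (abs_max_sub_max_le_max _ _ _ _) ?_
      simp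
    refine le_trans h1 (le_trans h2 ?_)
    have h3 : (r - |‖x - σ₀‖ - ρ|) / c - (r - |‖y - σ₀‖ - ρ|) / c
        = (|‖y - σ₀‖ - ρ| - |‖x - σ₀‖ - ρ|) / c := by ring
    rw [h3, abs_div, abs_of_pos hc]
    have h4 : |(|‖y - σ₀‖ - ρ| - |‖x - σ₀‖ - ρ|)| ≤ |‖y - σ₀‖ - ‖x - σ₀‖| := by
      have := abs_abs_sub_abs_le_abs_sub (‖y - σ₀‖ - ρ) (‖x - σ₀‖ - ρ)
      simpa using this
    have h5 : |‖y - σ₀‖ - ‖x - σ₀‖| ≤ ‖(y - σ₀) - (x - σ₀)‖ := abs_norm_sub_norm_le _ _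
    have h6 : ‖(y - σ₀) - (x - σ₀)‖ = dist x y := by
      rw [dist_comm, dist_eq_norm]; congr 1; abel
    rw [one_div, inv_mul_eq_div, div_le_div_iff_of_pos_right hc]
    exact le_trans h4 (le_trans h5 (le_of_eq h6))
  -- norm of gradient equals norm of fderiv
  have hgf : ∀ x : EuclideanSpace ℝ (Fin d), ‖gradient w x‖ = ‖fderiv ℝ w x‖ := by
    intro x
    unfold gradient
    exact LinearIsometryEquiv.norm_map _ _
  have hgnorm : ∀ x : EuclideanSpace ℝ (Fin d), ‖gradient w x‖ ≤ 1 / c := by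
    intro x
    rw [hgf x, ← hKc]
    exact norm_fderiv_le_of_lipschitz ℝ hlipw
  -- locally-constant implies zero gradient
  have loc : ∀ (U : Set (EuclideanSpace ℝ (Fin d))) (cst : ℝ), IsOpen U → ∀ x ∈ U, (∀ y ∈ U, w y = cst) →
      gradient w x = 0 := by
    intro U cst hU x hx hwc
    have hev : w =ᶠ[nhds x] fun _ => cst :=
      Filter.eventuallyEq_of_mem (hU.mem_nhds hx) hwc
    have hfd : fderiv ℝ w x = fderiv ℝ (fun _ => cst) x := hev.fderiv_eq
    rw [fderiv_fun_const] at hfd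
    simp only [Pi.zero_apply] at hfd
    unfold gradient
    rw [hfd, map_zero]
  have hT : Continuous fun y : EuclideanSpace ℝ (Fin d) => ‖y - σ₀‖ :=
    (continuous_id.sub continuous_const).norm
  -- values of w
  have hw0 : ∀ y : EuclideanSpace ℝ (Fin d), r < |‖y - σ₀‖ - ρ| → w y = 0 := by
    intro y hy
    rw [hw y]
    have : (r - |‖y - σ₀‖ - ρ|) / ((1 - ε) * r) ≤ 0 :=
      div_nonpos_of_nonpos_of_nonneg (by linarith) (le_of_lt hc)
    rw [max_eq_left this, min_eq_right zero_le_one]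
  have hw1 : ∀ y : EuclideanSpace ℝ (Fin d), |‖y - σ₀‖ - ρ| < ε * r → w y = 1 := by
    intro y hy
    rw [hw y]
    have h1 : (1 : ℝ) ≤ (r - |‖y - σ₀‖ - ρ|) / ((1 - ε) * r) := by
      rw [le_div_iff₀ hc]
      nlinarith
    rw [min_eq_left (le_trans h1 (le_max_right _ _))]
  have hwle : ∀ y : EuclideanSpace ℝ (Fin d), 0 ≤ w y ∧ w y ≤ 1 := by
    intro y
    rw [hw y]
    exact ⟨le_min zero_le_one (le_max_left _ _), min_le_left _ _⟩
  -- the two relevant spheres are null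
  have hsph : ∀ s : ℝ, volume {y : EuclideanSpace ℝ (Fin d) | ‖y - σ₀‖ = s} = 0 := by
    intro s
    have : {y : EuclideanSpace ℝ (Fin d) | ‖y - σ₀‖ = s} = Metric.sphere σ₀ s := by
      ext y; simp [Metric.mem_sphere, dist_eq_norm]
    rw [this]
    exact Measure.addHaar_sphere (μ := (volume : Measure (EuclideanSpace ℝ (Fin d)))) σ₀ s
  -- gradient vanishes off the annulus difference, away from two spheres
  have hkey : ∀ x : EuclideanSpace ℝ (Fin d), ‖x - σ₀‖ ≠ ρ - r → ‖x - σ₀‖ ≠ r + ρ →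
      x ∉ {y : EuclideanSpace ℝ (Fin d) | ρ - r < ‖y - σ₀‖ ∧ ‖y - σ₀‖ < r + ρ} \
        {y : EuclideanSpace ℝ (Fin d) | ρ - ε * r < ‖y - σ₀‖ ∧ ‖y - σ₀‖ < ε * r + ρ} →
      gradient w x = 0 := by
    intro x hx₁ hx₂ hx
    rw [Set.mem_diff, not_and_or, not_not] at hx
    rcases hx with hx | hx
    · simp only [Set.mem_setOf_eq, not_and_or, not_lt] at hx
      rcases hx with hx | hx
      · have hlt : ‖x - σ₀‖ < ρ - r := lt_of_le_of_ne hx hx₁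
        refine loc ((fun y : EuclideanSpace ℝ (Fin d) => ‖y - σ₀‖) ⁻¹' Set.Iio (ρ - r)) 0
          (hT.isOpen_preimage _ isOpen_Iio) x hlt ?_
        intro y hy
        refine hw0 y ?_
        have : ‖y - σ₀‖ < ρ - r := hy
        calc r < ρ - ‖y - σ₀‖ := by linarith
          _ = -(‖y - σ₀‖ - ρ) := by ring
          _ ≤ |‖y - σ₀‖ - ρ| := neg_le_abs _
      · have hlt : r + ρ < ‖x - σ₀‖ := lt_of_le_of_ne hx (Ne.symm hx₂)
        refine loc ((fun y : EuclideanSpace ℝ (Fin d) => ‖y - σ₀‖) ⁻¹' Set.Ioi (r + ρ)) 0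
          (hT.isOpen_preimage _ isOpen_Ioi) x hlt ?_
        intro y hy
        refine hw0 y ?_
        have : r + ρ < ‖y - σ₀‖ := hy
        calc r < ‖y - σ₀‖ - ρ := by linarith
          _ ≤ |‖y - σ₀‖ - ρ| := le_abs_self _
    · refine loc ({y : EuclideanSpace ℝ (Fin d) | ρ - ε * r < ‖y - σ₀‖} ∩ {y : EuclideanSpace ℝ (Fin d) | ‖y - σ₀‖ < ε * r + ρ}) 1
        ?_ x hx ?_
      · exact (isOpen_lt continuous_const hT).inter (isOpen_lt hT continuous_const)
      · rintro y ⟨hy₁, hy₂⟩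
        refine hw1 y ?_
        rw [abs_lt]
        constructor <;> [linarith [Set.mem_setOf_eq ▸ hy₁]; linarith [Set.mem_setOf_eq ▸ hy₂]]
  -- measurability of the gradient
  have hgrad_meas : Measurable (gradient w) := by
    have : gradient w = fun x => (InnerProductSpace.toDual ℝ (EuclideanSpace ℝ (Fin d))).symm (fderiv ℝ w x) := rfl
    rw [this]
    exact (LinearIsometryEquiv.continuous _).measurable.comp (measurable_fderiv ℝ w)
  have hw_cont : Continuous w := hlipw.continuous
  set A : Set (EuclideanSpace ℝ (Fin d)) := {y : EuclideanSpace ℝ (Fin d) | ρ - r < ‖y - σ₀‖ ∧ ‖y - σ₀‖ < r + ρ} with hA_def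
  have hA_open : IsOpen A :=
    (isOpen_lt continuous_const hT).inter (isOpen_lt hT continuous_const)
  have hA_fin : volume A < ⊤ := by
    refine lt_of_le_of_lt (measure_mono (fun y hy => ?_)) (measure_ball_lt_top (x := σ₀) (r := r + ρ))
    have : ‖y - σ₀‖ < r + ρ := hy.2
    simpa [Metric.mem_ball, dist_eq_norm] using this
  set C : ℝ := 1 + 1 / ((1 - ε) ^ 2 * r ^ 2) with hC_def
  have hCeq : C = 1 + (1 / c) ^ 2 := by
    rw [hC_def, hc_def]
    rw [div_pow, one_pow, mul_pow]
  -- a.e. bound by indicator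
  have hae_off : ∀ᵐ x ∂(volume : Measure (EuclideanSpace ℝ (Fin d))),
      ‖x - σ₀‖ ≠ ρ - r ∧ ‖x - σ₀‖ ≠ r + ρ := by
    have h₁ : ∀ᵐ x ∂(volume : Measure (EuclideanSpace ℝ (Fin d))), ‖x - σ₀‖ ≠ ρ - r := by
      rw [ae_iff]; simpa using hsph (ρ - r)
    have h₂ : ∀ᵐ x ∂(volume : Measure (EuclideanSpace ℝ (Fin d))), ‖x - σ₀‖ ≠ r + ρ := by
      rw [ae_iff]; simpa using hsph (r + ρ)
    exact h₁.and h₂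
  have hbound : ∀ᵐ x ∂(volume : Measure (EuclideanSpace ℝ (Fin d))),
      ‖gradient w x‖ ^ 2 + w x ^ 2 ≤ A.indicator (fun _ => C) x := by
    filter_upwards [hae_off] with x hx
    obtain ⟨hx₁, hx₂⟩ := hx
    by_cases hxA : x ∈ A
    · rw [Set.indicator_of_mem hxA, hCeq]
      have h1 : ‖gradient w x‖ ^ 2 ≤ (1 / c) ^ 2 :=
        pow_le_pow_left₀ (norm_nonneg _) (hgnorm x) 2
      have h2 : w x ^ 2 ≤ 1 := by
        obtain ⟨ha, hb⟩ := hwle x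
        nlinarith
      linarith
    · rw [Set.indicator_of_notMem hxA]
      have hg0 : gradient w x = 0 := hkey x hx₁ hx₂ (fun h => hxA h.1)
      have hw0' : w x = 0 := by
        simp only [hA_def, Set.mem_setOf_eq, not_and_or, not_lt] at hxA
        rcases hxA with h | h
        · refine hw0 x ?_
          have hlt : ‖x - σ₀‖ < ρ - r := lt_of_le_of_ne h hx₁
          calc r < ρ - ‖x - σ₀‖ := by linarith
            _ = -(‖x - σ₀‖ - ρ) := by ring
            _ ≤ |‖x - σ₀‖ - ρ| := neg_le_abs _
        · refine hw0 x ?_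
          have hlt : r + ρ < ‖x - σ₀‖ := lt_of_le_of_ne h (Ne.symm hx₂)
          calc r < ‖x - σ₀‖ - ρ := by linarith
            _ ≤ |‖x - σ₀‖ - ρ| := le_abs_self _
      rw [hg0, hw0']
      simp
  have hg_int : Integrable (A.indicator (fun _ => C)) (volume : Measure (EuclideanSpace ℝ (Fin d))) := by
    refine (integrableOn_const hA_fin.ne).integrable_indicator hA_open.measurableSet
  have hf_meas : AEStronglyMeasurable (fun x => ‖gradient w x‖ ^ 2 + w x ^ 2)
      (volume : Measure (EuclideanSpace ℝ (Fin d))) :=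
    ((hgrad_meas.norm.pow_const 2).add ((hw_cont.measurable).pow_const 2)).aestronglyMeasurable
  have hf_int : Integrable (fun x => ‖gradient w x‖ ^ 2 + w x ^ 2) (volume : Measure (EuclideanSpace ℝ (Fin d))) := by
    refine hg_int.mono' hf_meas ?_
    filter_upwards [hbound] with x hx
    have h1 : 0 ≤ ‖gradient w x‖ ^ 2 + w x ^ 2 := by positivity
    rw [Real.norm_eq_abs, abs_of_nonneg h1]
    exact hx
  refine ⟨⟨K, hlipw⟩, hlipw.ae_differentiableAt, ?_, ?_, ?_⟩
  · exact Filter.Eventually.of_forall hgnorm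
  · filter_upwards [hae_off] with x hx hnot
    exact hkey x hx.1 hx.2 hnot
  · calc ∫ x, (‖gradient w x‖ ^ 2 + w x ^ 2) ∂volume
        ≤ ∫ x, A.indicator (fun _ => C) x ∂volume := integral_mono_ae hf_int hg_int hbound
      _ = (volume A).toReal • C := integral_indicator_const C hA_open.measurableSet
      _ = C * (volume A).toReal := by rw [smul_eq_mul, mul_comm]
end

section
/- Let (X, μ) be a measure space and let S' ⊆ S be measurable subsets of X with μ(S) < +∞. Let α : X → [0,∞) be measurable and essentially bounded with α ≥ α₀ almost everywhere on S' for some α₀ > 0. Let w : X → ℝ be measurable with 0 ≤ w ≤ 1 everywhere, w = 1 almost everywhere on S', and w = 0 almost everywhere on X ∖ S. Let F : [0,∞) → ℝ be continuous with F(0) = 0, and let t₀ > 0 with F(t₀) > 0. Then the function σ ↦ α(σ) F(t₀ w(σ)) is μ-integrable and ∫_X α(σ) F(t₀ w(σ)) dμ ≥ α₀ F(t₀) μ(S') − ‖α‖_∞ ( sup_{t ∈ (0,t₀]} |F(t)| ) μ(S ∖ S'). -/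
open MeasureTheory

/-- On a measure space `(X, μ)` with measurable `S' ⊆ S`, `μ(S) < ∞`,
`α ≥ 0` measurable essentially bounded with `α ≥ α₀ > 0` a.e. on `S'`, `w` measurable
with `0 ≤ w ≤ 1`, `w = 1` a.e. on `S'`, `w = 0` a.e. on `X ∖ S`, and `F : [0,∞) → ℝ`
continuous with `F(0) = 0`, `t₀ > 0`, `F(t₀) > 0`: the function `σ ↦ α(σ) F(t₀ w(σ))`
is integrable and
`∫ α F(t₀ w) dμ ≥ α₀ F(t₀) μ(S') − ‖α‖_∞ (sup_{t ∈ (0,t₀]} |F(t)|) μ(S ∖ S')`. -/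
theorem stmt_11 {X : Type*} [MeasurableSpace X] (μ : Measure X)
    (S S' : Set X) (hS : MeasurableSet S) (hS' : MeasurableSet S') (hsub : S' ⊆ S)
    (hSfin : μ S < ⊤)
    (α : X → ℝ) (hα_meas : Measurable α) (hα_nonneg : ∀ σ, 0 ≤ α σ)
    (hα_top : MemLp α ⊤ μ)
    (α₀ : ℝ) (hα₀ : 0 < α₀) (hα_lb : ∀ᵐ σ ∂(μ.restrict S'), α₀ ≤ α σ)
    (w : X → ℝ) (hw_meas : Measurable w) (hw01 : ∀ σ, 0 ≤ w σ ∧ w σ ≤ 1)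
    (hwS' : ∀ᵐ σ ∂(μ.restrict S'), w σ = 1)
    (hwout : ∀ᵐ σ ∂(μ.restrict Sᶜ), w σ = 0)
    (F : ℝ → ℝ) (hF_cont : ContinuousOn F (Set.Ici 0)) (hF0 : F 0 = 0)
    (t₀ : ℝ) (ht₀ : 0 < t₀) (hFt₀ : 0 < F t₀) :
    Integrable (fun σ => α σ * F (t₀ * w σ)) μ ∧
      α₀ * F t₀ * (μ S').toReal -
          (eLpNorm α ⊤ μ).toReal * sSup ((fun t => |F t|) '' Set.Ioc 0 t₀) *
            (μ (S \ S')).toReal ≤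
        ∫ σ, α σ * F (t₀ * w σ) ∂μ := by
  classical
  set A : ℝ := (eLpNorm α ⊤ μ).toReal with hAdef
  set M : ℝ := sSup ((fun t => |F t|) '' Set.Ioc 0 t₀) with hMdef
  set g : X → ℝ := fun σ => α σ * F (t₀ * w σ) with hgdef
  -- nonnegativity of the argument
  have harg_nonneg : ∀ σ, 0 ≤ t₀ * w σ := fun σ =>
    mul_nonneg ht₀.le (hw01 σ).1
  have harg_le : ∀ σ, t₀ * w σ ≤ t₀ := fun σ => by
    have := (hw01 σ).2
    nlinarith
  -- continuous extension of F
  set F' : ℝ → ℝ := fun t => F (max t 0) with hF'def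
  have hF'_cont : Continuous F' := by
    apply hF_cont.comp_continuous (continuous_id.max continuous_const : Continuous fun t : ℝ => max t 0)
    intro x; exact Set.mem_Ici.mpr (le_max_right x 0)
  have hF'_eq : ∀ σ, F (t₀ * w σ) = F' (t₀ * w σ) := by
    intro σ
    simp only [hF'def]
    rw [max_eq_left (harg_nonneg σ)]
  have hg_meas : Measurable g := by
    have : Measurable fun σ => F' (t₀ * w σ) :=
      hF'_cont.measurable.comp ((measurable_const).mul hw_meas)
    have : Measurable fun σ => F (t₀ * w σ) := by
      simpa only [← hF'_eq] using this
    exact hα_meas.mul this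
  -- bound on F over [0,t₀]
  obtain ⟨C, hC⟩ : ∃ C, ∀ t ∈ Set.Icc (0:ℝ) t₀, ‖F t‖ ≤ C := by
    exact (isCompact_Icc).exists_bound_of_continuousOn
      (hF_cont.mono (fun t ht => ht.1))
  have hbdd : BddAbove ((fun t => |F t|) '' Set.Ioc 0 t₀) := by
    refine ⟨C, ?_⟩
    rintro x ⟨t, ht, rfl⟩
    exact hC t ⟨ht.1.le, ht.2⟩
  have hne : ((fun t => |F t|) '' Set.Ioc 0 t₀).Nonempty :=
    ⟨|F t₀|, t₀, ⟨ht₀, le_refl _⟩, rfl⟩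
  have hM_ub : ∀ t ∈ Set.Ioc (0:ℝ) t₀, |F t| ≤ M := fun t ht =>
    le_csSup hbdd ⟨t, ht, rfl⟩
  have hM_pos : 0 < M := lt_of_lt_of_le hFt₀ ((le_abs_self _).trans
    (hM_ub t₀ ⟨ht₀, le_refl _⟩))
  have hFbound : ∀ σ, |F (t₀ * w σ)| ≤ M := by
    intro σ
    rcases eq_or_lt_of_le (harg_nonneg σ) with h | h
    · rw [← h, hF0]; simpa using hM_pos.le
    · exact hM_ub _ ⟨h, harg_le σ⟩
  -- a.e. bound on α
  have hα_fin : eLpNorm α ⊤ μ < ⊤ := hα_top.2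
  have hαA : ∀ᵐ σ ∂μ, |α σ| ≤ A := by
    have h := ae_le_eLpNormEssSup (f := α) (μ := μ)
    filter_upwards [h] with σ hσ
    have : (‖α σ‖₊ : ENNReal) ≤ eLpNorm α ⊤ μ := by
      rw [eLpNorm_exponent_top]; exact_mod_cast hσ
    have := ENNReal.toReal_mono hα_fin.ne this
    simpa [Real.norm_eq_abs, hAdef] using this
  have hA_nonneg : 0 ≤ A := ENNReal.toReal_nonneg
  -- a.e. bound on g
  have hgA : ∀ᵐ σ ∂μ, ‖g σ‖ ≤ A * M := by
    filter_upwards [hαA] with σ hσ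
    have : ‖g σ‖ = |α σ| * |F (t₀ * w σ)| := by
      simp [hgdef, Real.norm_eq_abs, abs_mul]
    rw [this]
    exact mul_le_mul hσ (hFbound σ) (abs_nonneg _) hA_nonneg
  -- g vanishes a.e. off S
  have hg_zero : ∀ᵐ σ ∂μ, σ ∉ S → g σ = 0 := by
    have := (ae_restrict_iff' hS.compl).mp hwout
    filter_upwards [this] with σ hσ hσS
    have hw0 : w σ = 0 := hσ hσS
    simp [hgdef, hw0, hF0]
  have hg_ind : g =ᵐ[μ] S.indicator g := by
    filter_upwards [hg_zero] with σ hσ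
    by_cases h : σ ∈ S
    · simp [Set.indicator_of_mem h]
    · simp [Set.indicator_of_notMem h, hσ h]
  -- integrability
  have hfinS : IsFiniteMeasure (μ.restrict S) :=
    ⟨by simpa [Measure.restrict_apply_univ] using hSfin⟩
  have hIntS : IntegrableOn g S μ := by
    refine ⟨hg_meas.aestronglyMeasurable.restrict, ?_⟩
    exact HasFiniteIntegral.of_bounded (C := A * M) (ae_restrict_of_ae hgA)
  have hInt : Integrable g μ := by
    rw [integrable_congr hg_ind]
    rwa [integrable_indicator_iff hS]
  refine ⟨hInt, ?_⟩
  -- split the integral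
  have hcompl : ∫ σ in Sᶜ, g σ ∂μ = 0 := by
    have : g =ᵐ[μ.restrict Sᶜ] 0 := by
      filter_upwards [hwout] with σ hσ
      simp [hgdef, hσ, hF0]
    exact integral_eq_zero_of_ae this
  have hsplit1 : ∫ σ, g σ ∂μ = ∫ σ in S, g σ ∂μ := by
    rw [← integral_add_compl hS hInt, hcompl, add_zero]
  have hSdiff : MeasurableSet (S \ S') := hS.diff hS'
  have hunion : S' ∪ S \ S' = S := Set.union_diff_cancel hsub
  have hsplit2 : ∫ σ in S, g σ ∂μ = ∫ σ in S', g σ ∂μ + ∫ σ in S \ S', g σ ∂μ := by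
    have h := setIntegral_union (Set.disjoint_sdiff_right) hSdiff
      (hIntS.mono_set hsub) (hIntS.mono_set Set.diff_subset)
    rw [hunion] at h
    exact h
  -- lower bound on S'
  have hμS' : μ S' < ⊤ := lt_of_le_of_lt (measure_mono hsub) hSfin
  have hIntS' : IntegrableOn g S' μ := hIntS.mono_set hsub
  have hlow1 : α₀ * F t₀ * (μ S').toReal ≤ ∫ σ in S', g σ ∂μ := by
    haveI : IsFiniteMeasure (μ.restrict S') :=
      ⟨by simpa [Measure.restrict_apply_univ] using hμS'⟩
    have hle : ∀ᵐ σ ∂(μ.restrict S'), α₀ * F t₀ ≤ g σ := by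
      filter_upwards [hα_lb, hwS'] with σ h1 h2
      have : g σ = α σ * F t₀ := by simp [hgdef, h2]
      rw [this]
      exact mul_le_mul_of_nonneg_right h1 hFt₀.le
    have := integral_mono_ae (integrable_const (α₀ * F t₀)) hIntS' hle
    rwa [setIntegral_const, smul_eq_mul, mul_comm] at this
  -- lower bound on S \ S'
  have hμd : μ (S \ S') < ⊤ :=
    lt_of_le_of_lt (measure_mono Set.diff_subset) hSfin
  have hIntd : IntegrableOn g (S \ S') μ := hIntS.mono_set Set.diff_subset
  have hlow2 : -(A * M) * (μ (S \ S')).toReal ≤ ∫ σ in S \ S', g σ ∂μ := by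
    haveI : IsFiniteMeasure (μ.restrict (S \ S')) :=
      ⟨by simpa [Measure.restrict_apply_univ] using hμd⟩
    have hle : ∀ᵐ σ ∂(μ.restrict (S \ S')), -(A * M) ≤ g σ := by
      filter_upwards [ae_restrict_of_ae hgA] with σ hσ
      have := abs_le.mp (by simpa [Real.norm_eq_abs] using hσ)
      linarith [this.1]
    have := integral_mono_ae (integrable_const (-(A * M))) hIntd hle
    rwa [setIntegral_const, smul_eq_mul, mul_comm] at this
  have : α₀ * F t₀ * (μ S').toReal - A * M * (μ (S \ S')).toReal ≤ ∫ σ, g σ ∂μ := by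
    rw [hsplit1, hsplit2]
    linarith
  simpa [hgdef, hAdef, hMdef] using this
end

section
/- Let σ₀ ∈ ℝ^d (d ≥ 1) and 0 < r < ρ. Let F : [0,∞) → ℝ be continuous with F(0) = 0, let t₀ > 0 with F(t₀) > 0, and let α : ℝ^d → [0,∞) be measurable and essentially bounded with α ≥ α₀ almost everywhere on A_r^ρ(σ₀) for some α₀ > 0. Then there exists ε₀ ∈ [1/2, 1) such that α₀ F(t₀) · vol(A_{ε₀ r}^ρ(σ₀)) > ‖α‖_∞ · ( sup_{t ∈ (0,t₀]} |F(t)| ) · vol( A_r^ρ(σ₀) ∖ A_{ε₀ r}^ρ(σ₀) ); consequently, for the test function w_{ρ,r}^{ε₀}(x) = min{1, max{0, (r − | ‖x − σ₀‖ − ρ |)/((1−ε₀)r)}}, one has ∫_{ℝ^d} α(x) F(t₀ w_{ρ,r}^{ε₀}(x)) dx > 0. -/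
open MeasureTheory

set_option maxHeartbeats 1000000 in
/-- Let `σ₀ ∈ ℝ^d` (`d ≥ 1`), `0 < r < ρ`, `F : [0,∞) → ℝ`
continuous with `F(0) = 0`, `t₀ > 0` with `F(t₀) > 0`, and `α ≥ 0` measurable,
essentially bounded, with `α ≥ α₀ > 0` a.e. on the annulus `A_r^ρ(σ₀)`. Then there
exists `ε₀ ∈ [1/2,1)` with
`α₀ F(t₀) vol(A_{ε₀r}^ρ) > ‖α‖_∞ (sup_{(0,t₀]}|F|) vol(A_r^ρ ∖ A_{ε₀r}^ρ)`, and
consequently `∫ α F(t₀ w_{ρ,r}^{ε₀}) > 0` for the clamped test function. -/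
theorem stmt_12 (d : ℕ) (hd : 1 ≤ d) (σ₀ : EuclideanSpace ℝ (Fin d)) (r ρ : ℝ)
    (hr : 0 < r) (hrρ : r < ρ)
    (F : ℝ → ℝ) (hF_cont : ContinuousOn F (Set.Ici 0)) (hF0 : F 0 = 0)
    (t₀ : ℝ) (ht₀ : 0 < t₀) (hFt₀ : 0 < F t₀)
    (α : EuclideanSpace ℝ (Fin d) → ℝ) (hα_meas : Measurable α)
    (hα_nonneg : ∀ x, 0 ≤ α x) (hα_top : MemLp α ⊤ volume)
    (α₀ : ℝ) (hα₀ : 0 < α₀)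
    (hα_lb : ∀ᵐ x ∂(volume.restrict
      {y : EuclideanSpace ℝ (Fin d) | ρ - r < ‖y - σ₀‖ ∧ ‖y - σ₀‖ < r + ρ}),
      α₀ ≤ α x) :
    ∃ ε₀ ∈ Set.Ico (1 / 2 : ℝ) 1,
      (eLpNorm α ⊤ volume).toReal * sSup ((fun t => |F t|) '' Set.Ioc 0 t₀) *
          (volume ({y : EuclideanSpace ℝ (Fin d) | ρ - r < ‖y - σ₀‖ ∧ ‖y - σ₀‖ < r + ρ} \
            {y : EuclideanSpace ℝ (Fin d) |
              ρ - ε₀ * r < ‖y - σ₀‖ ∧ ‖y - σ₀‖ < ε₀ * r + ρ})).toReal <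
        α₀ * F t₀ * (volume {y : EuclideanSpace ℝ (Fin d) |
          ρ - ε₀ * r < ‖y - σ₀‖ ∧ ‖y - σ₀‖ < ε₀ * r + ρ}).toReal ∧
      0 < ∫ x, α x * F (t₀ * min 1 (max 0 ((r - |‖x - σ₀‖ - ρ|) / ((1 - ε₀) * r)))) := by
  classical
  set A : ℝ → Set (EuclideanSpace ℝ (Fin d)) := fun ε =>
    {y : EuclideanSpace ℝ (Fin d) | ρ - ε * r < ‖y - σ₀‖ ∧ ‖y - σ₀‖ < ε * r + ρ}
    with hA_def
  have hcont : Continuous fun y : EuclideanSpace ℝ (Fin d) => ‖y - σ₀‖ :=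
    (continuous_id.sub continuous_const).norm
  have hAopen : ∀ ε, IsOpen (A ε) := by
    intro ε
    have h := IsOpen.preimage hcont (isOpen_Ioo (a := ρ - ε * r) (b := ε * r + ρ))
    exact h
  have hAmeas : ∀ ε, MeasurableSet (A ε) := fun ε => (hAopen ε).measurableSet
  have hAmono : ∀ ε ε' : ℝ, ε ≤ ε' → A ε ⊆ A ε' := by
    intro ε ε' h y hy
    obtain ⟨h1, h2⟩ := hy
    have : ε * r ≤ ε' * r := mul_le_mul_of_nonneg_right h hr.le
    exact ⟨by linarith, by linarith⟩
  have hAfin : volume (A 1) < ⊤ := by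
    refine lt_of_le_of_lt (measure_mono ?_) (measure_ball_lt_top (x := σ₀) (r := 1 * r + ρ))
    intro y hy
    simpa [Metric.mem_ball, dist_eq_norm] using hy.2
  -- the half annulus has positive volume
  have hApos : 0 < volume (A (1 / 2)) := by
    have hne : (A (1 / 2)).Nonempty := by
      refine ⟨σ₀ + ρ • EuclideanSpace.single (⟨0, hd⟩ : Fin d) (1 : ℝ), ?_⟩
      have hnorm : ‖σ₀ + ρ • EuclideanSpace.single (⟨0, hd⟩ : Fin d) (1 : ℝ) - σ₀‖ = ρ := by
        rw [add_sub_cancel_left, norm_smul, EuclideanSpace.norm_single]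
        simp [abs_of_pos (lt_trans hr hrρ)]
      constructor <;> rw [hnorm] <;> linarith
    exact (hAopen _).measure_pos volume hne
  -- bound on |F| on (0, t₀]
  set M : ℝ := sSup ((fun t => |F t|) '' Set.Ioc 0 t₀) with hM_def
  have hFabs : ContinuousOn (fun t => |F t|) (Set.Icc 0 t₀) :=
    (hF_cont.mono (fun x hx => hx.1)).abs
  have hbddIcc : BddAbove ((fun t => |F t|) '' Set.Icc 0 t₀) :=
    (isCompact_Icc.image_of_continuousOn hFabs).bddAbove
  have hM_bdd : BddAbove ((fun t => |F t|) '' Set.Ioc 0 t₀) :=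
    hbddIcc.mono (Set.image_mono Set.Ioc_subset_Icc_self)
  have hMF : F t₀ ≤ M := by
    have h1 : |F t₀| ∈ (fun t => |F t|) '' Set.Ioc 0 t₀ :=
      ⟨t₀, ⟨ht₀, le_refl _⟩, rfl⟩
    exact (le_abs_self _).trans (le_csSup hM_bdd h1)
  have hM_pos : 0 < M := lt_of_lt_of_le hFt₀ hMF
  have hbound : ∀ t ∈ Set.Icc (0:ℝ) t₀, |F t| ≤ M := by
    intro t ht
    rcases eq_or_lt_of_le ht.1 with h | h
    · simp [← h, hF0, hM_pos.le]
    · exact le_csSup hM_bdd ⟨t, ⟨h, ht.2⟩, rfl⟩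
  -- essential sup bound on α
  set N : ℝ := (eLpNorm α ⊤ volume).toReal with hN_def
  have hN_nonneg : 0 ≤ N := ENNReal.toReal_nonneg
  have hαN : ∀ᵐ x, α x ≤ N := by
    have h1 : ∀ᵐ x, (‖α x‖₊ : ENNReal) ≤ eLpNormEssSup α volume := ae_le_eLpNormEssSup
    have hfin : eLpNormEssSup α volume ≠ ⊤ := by
      have := hα_top.2
      rwa [eLpNorm_exponent_top, lt_top_iff_ne_top] at this
    filter_upwards [h1] with x hx
    have := ENNReal.toReal_mono hfin hx
    rw [ENNReal.coe_toReal, coe_nnnorm] at this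
    calc α x ≤ ‖α x‖ := le_abs_self _
    _ ≤ (eLpNormEssSup α volume).toReal := this
    _ = N := by rw [hN_def, eLpNorm_exponent_top]
  -- choice of ε₀ via continuity of measure
  set s : ℕ → Set (EuclideanSpace ℝ (Fin d)) := fun n => A 1 \ A (1 - 1 / (n + 2)) with hs_def
  have hanti : Antitone s := by
    intro m n hmn
    apply Set.diff_subset_diff_right
    apply hAmono
    have h2 : (0:ℝ) < m + 2 := by positivity
    have h3 : (m:ℝ) + 2 ≤ (n:ℝ) + 2 := by exact_mod_cast by omega
    have := one_div_le_one_div_of_le h2 h3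
    linarith
  have hInter : ⋂ n, s n = ∅ := by
    ext y
    simp only [Set.mem_iInter, Set.mem_empty_iff_false, iff_false, not_forall]
    by_cases hy : y ∈ A 1
    · obtain ⟨h1, h2⟩ := hy
      have habs : |‖y - σ₀‖ - ρ| < r := by
        rw [abs_lt]; constructor <;> [linarith; linarith]
      have hlt : |‖y - σ₀‖ - ρ| / r < 1 := (div_lt_one hr).2 habs
      obtain ⟨n, hn⟩ := exists_nat_one_div_lt (show (0:ℝ) < 1 - |‖y - σ₀‖ - ρ| / r by linarith)
      refine ⟨n, fun hmem => hmem.2 ?_⟩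
      have h5 : (1:ℝ) / (n + 2) ≤ 1 / (n + 1) := by
        apply one_div_le_one_div_of_le (by positivity)
        push_cast; linarith
      have h6 : |‖y - σ₀‖ - ρ| / r < 1 - 1 / ((n:ℝ) + 2) := by
        push_cast at hn ⊢; linarith
      have h7 : |‖y - σ₀‖ - ρ| < (1 - 1 / ((n:ℝ) + 2)) * r := by
        rw [div_lt_iff₀ hr] at h6; linarith [h6]
      rw [abs_lt] at h7
      exact ⟨by linarith [h7.1], by linarith [h7.2]⟩
    · exact ⟨0, fun hmem => hy hmem.1⟩
  have htend : Filter.Tendsto (fun n => volume (s n)) Filter.atTop (nhds 0) := by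
    have := tendsto_measure_iInter_atTop (μ := volume) (s := s)
      (fun n => ((hAmeas 1).diff (hAmeas _)).nullMeasurableSet) hanti
      ⟨0, (lt_of_le_of_lt (measure_mono Set.diff_subset) hAfin).ne⟩
    rwa [hInter, measure_empty] at this
  have htendR : Filter.Tendsto (fun n => N * M * (volume (s n)).toReal)
      Filter.atTop (nhds 0) := by
    have h1 : Filter.Tendsto (fun n => (volume (s n)).toReal) Filter.atTop (nhds 0) := by
      have := (ENNReal.tendsto_toReal (a := 0) (by simp)).comp htend
      exact this
    have := h1.const_mul (N * M)
    simpa using this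
  set δ : ℝ := α₀ * F t₀ * (volume (A (1 / 2))).toReal with hδ_def
  have hAfin' : ∀ ε ≤ (1:ℝ), volume (A ε) < ⊤ := fun ε hε =>
    lt_of_le_of_lt (measure_mono (hAmono _ _ hε)) hAfin
  have hδ_pos : 0 < δ := by
    apply mul_pos (mul_pos hα₀ hFt₀)
    exact ENNReal.toReal_pos hApos.ne' (hAfin' _ (by norm_num)).ne
  obtain ⟨n, hn⟩ := (htendR.eventually (gt_mem_nhds hδ_pos)).exists
  set ε₀ : ℝ := 1 - 1 / (n + 2) with hε₀_def
  have hε₀_mem : ε₀ ∈ Set.Ico (1 / 2 : ℝ) 1 := by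
    constructor
    · have : (1:ℝ) / (n + 2) ≤ 1 / 2 := by
        apply one_div_le_one_div_of_le (by norm_num)
        push_cast; linarith [Nat.cast_nonneg (α := ℝ) n]
      rw [hε₀_def]; linarith
    · rw [hε₀_def]; have : (0:ℝ) < 1 / (n + 2) := by positivity
      linarith
  have hε₀_lt1 : ε₀ < 1 := hε₀_mem.2
  have hε₀_half : (1/2 : ℝ) ≤ ε₀ := hε₀_mem.1
  -- restate sets
  have hA1_eq : {y : EuclideanSpace ℝ (Fin d) | ρ - r < ‖y - σ₀‖ ∧ ‖y - σ₀‖ < r + ρ} = A 1 := by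
    simp [hA_def]
  -- the first (measure) inequality
  have hmain : N * M * (volume (A 1 \ A ε₀)).toReal <
      α₀ * F t₀ * (volume (A ε₀)).toReal := by
    refine lt_of_lt_of_le hn ?_
    apply mul_le_mul_of_nonneg_left _ (mul_pos hα₀ hFt₀).le
    apply ENNReal.toReal_mono (hAfin' _ hε₀_lt1.le).ne
    exact measure_mono (hAmono _ _ hε₀_half)
  refine ⟨ε₀, hε₀_mem, ?_, ?_⟩
  · rw [hA1_eq]; exact hmain
  -- positivity of the integral
  set w : EuclideanSpace ℝ (Fin d) → ℝ := fun x => min 1 (max 0 ((r - |‖x - σ₀‖ - ρ|) / ((1 - ε₀) * r)))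
    with hw_def
  set g : EuclideanSpace ℝ (Fin d) → ℝ := fun x => α x * F (t₀ * w x) with hg_def
  have h1ε : 0 < (1 - ε₀) * r := mul_pos (by linarith) hr
  have hw_nonneg : ∀ x, 0 ≤ w x := fun x => le_min zero_le_one (le_max_left _ _)
  have hw_le1 : ∀ x, w x ≤ 1 := fun x => min_le_left _ _
  have hw_out : ∀ x, x ∉ A 1 → w x = 0 := by
    intro x hx
    have hx' : ¬(ρ - 1 * r < ‖x - σ₀‖ ∧ ‖x - σ₀‖ < 1 * r + ρ) := hx
    push_neg at hx'
    have habs : r ≤ |‖x - σ₀‖ - ρ| := by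
      by_cases h : ρ - 1 * r < ‖x - σ₀‖
      · have := hx' h
        rw [le_abs]; left; linarith
      · push_neg at h
        rw [le_abs]; right; linarith
    have hnum : r - |‖x - σ₀‖ - ρ| ≤ 0 := by linarith
    have : (r - |‖x - σ₀‖ - ρ|) / ((1 - ε₀) * r) ≤ 0 := div_nonpos_of_nonpos_of_nonneg hnum h1ε.le
    rw [hw_def]
    simp only
    rw [max_eq_left this, min_eq_right zero_le_one]
  have hw_in : ∀ x, x ∈ A ε₀ → w x = 1 := by
    intro x hx
    obtain ⟨h1, h2⟩ := hx
    have habs : |‖x - σ₀‖ - ρ| < ε₀ * r := by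
      rw [abs_lt]; constructor <;> linarith
    have hnum : (1 - ε₀) * r ≤ r - |‖x - σ₀‖ - ρ| := by nlinarith
    have hge1 : 1 ≤ (r - |‖x - σ₀‖ - ρ|) / ((1 - ε₀) * r) := (one_le_div h1ε).2 hnum
    rw [hw_def]
    simp only
    rw [min_eq_left (hge1.trans (le_max_right _ _))]
  have hFw : ∀ x, |F (t₀ * w x)| ≤ M := by
    intro x
    apply hbound
    constructor
    · exact mul_nonneg ht₀.le (hw_nonneg x)
    · calc t₀ * w x ≤ t₀ * 1 := mul_le_mul_of_nonneg_left (hw_le1 x) ht₀.le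
      _ = t₀ := mul_one _
  -- measurability
  have hw_cont : Continuous w := by
    apply Continuous.min continuous_const
    apply Continuous.max continuous_const
    exact (continuous_const.sub (hcont.sub continuous_const).abs).div_const _
  have hFw_cont : Continuous fun x => F (t₀ * w x) := by
    apply hF_cont.comp_continuous (continuous_const.mul hw_cont)
    intro x
    exact mul_nonneg ht₀.le (hw_nonneg x)
  have hg_meas : Measurable g := hα_meas.mul hFw_cont.measurable
  -- integrability
  have hg_bound : ∀ᵐ x, ‖g x‖ ≤ Set.indicator (A 1) (fun _ => N * M) x := by
    filter_upwards [hαN] with x hx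
    by_cases hmem : x ∈ A 1
    · rw [Set.indicator_of_mem hmem, hg_def]
      simp only [Real.norm_eq_abs, abs_mul, abs_of_nonneg (hα_nonneg x)]
      exact mul_le_mul hx (hFw x) (abs_nonneg _) hN_nonneg
    · rw [Set.indicator_of_notMem hmem, hg_def]
      simp [hw_out x hmem, hF0, mul_nonneg hN_nonneg hM_pos.le]
  have hg_int : Integrable g := by
    apply Integrable.mono' _ hg_meas.aestronglyMeasurable hg_bound
    rw [integrable_indicator_iff (hAmeas 1)]
    exact integrableOn_const hAfin.ne enorm_ne_top
  -- the integral over the whole space equals the integral over A 1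
  have hg_zero : ∀ x, x ∉ A 1 → g x = 0 := by
    intro x hx
    rw [hg_def]
    simp [hw_out x hx, hF0]
  have hind : g = Set.indicator (A 1) g := by
    funext x
    by_cases hmem : x ∈ A 1
    · rw [Set.indicator_of_mem hmem]
    · rw [Set.indicator_of_notMem hmem, hg_zero x hmem]
  have hsplit : (∫ x, g x) = (∫ x in A ε₀, g x) + ∫ x in A 1 \ A ε₀, g x := by
    conv_lhs => rw [hind]
    rw [integral_indicator (hAmeas 1)]
    rw [← setIntegral_union (Set.disjoint_sdiff_right)
      ((hAmeas 1).diff (hAmeas ε₀)) hg_int.integrableOn hg_int.integrableOn]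
    rw [Set.union_diff_cancel (hAmono _ _ hε₀_lt1.le)]
  have hI1 : α₀ * F t₀ * (volume (A ε₀)).toReal ≤ ∫ x in A ε₀, g x := by
    have hae : ∀ᵐ x ∂(volume.restrict (A ε₀)), α₀ * F t₀ ≤ g x := by
      have hlb' : ∀ᵐ x ∂(volume.restrict (A ε₀)), α₀ ≤ α x := by
        apply ae_restrict_of_ae_restrict_of_subset (hAmono _ _ hε₀_lt1.le)
        rwa [hA1_eq] at hα_lb
      filter_upwards [hlb', ae_restrict_mem (hAmeas ε₀)] with x hx hmem
      rw [hg_def]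
      simp only [hw_in x hmem, mul_one]
      exact mul_le_mul_of_nonneg_right hx hFt₀.le
    haveI : IsFiniteMeasure (volume.restrict (A ε₀)) :=
      ⟨by rw [Measure.restrict_apply_univ]; exact hAfin' _ hε₀_lt1.le⟩
    calc α₀ * F t₀ * (volume (A ε₀)).toReal
        = ∫ _x in A ε₀, (α₀ * F t₀) := by rw [setIntegral_const, smul_eq_mul, mul_comm]; rfl
      _ ≤ ∫ x in A ε₀, g x := integral_mono_ae (integrable_const _) hg_int.integrableOn hae
  have hI2 : |∫ x in A 1 \ A ε₀, g x| ≤ N * M * (volume (A 1 \ A ε₀)).toReal := by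
    have := norm_setIntegral_le_of_norm_le_const_ae (μ := volume) (f := g)
      (s := A 1 \ A ε₀) (C := N * M)
      (lt_of_le_of_lt (measure_mono Set.diff_subset) hAfin) ?_
    · rw [← Real.norm_eq_abs]; exact this
    · apply ae_restrict_of_ae
      filter_upwards [hαN] with x hx
      rw [hg_def]
      simp only [Real.norm_eq_abs, abs_mul, abs_of_nonneg (hα_nonneg x)]
      exact mul_le_mul hx (hFw x) (abs_nonneg _) hN_nonneg
  have hfinal : 0 < ∫ x, g x := by
    rw [hsplit]
    have h2 : -(N * M * (volume (A 1 \ A ε₀)).toReal) ≤ ∫ x in A 1 \ A ε₀, g x := by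
      have := (abs_le.1 hI2).1; linarith
    linarith
  exact hfinal
end

section
/- Let q > 2 and β, c, A, B be positive real numbers, and define h : [0,∞) → ℝ by h(γ) = (q/(βc)) · γ / ( q√2·A + 2^{q/2}·c^{q−1}·B·γ^{q−1} ) for γ > 0 and h(0) = 0. Then h(0) = 0, h(γ) → 0 as γ → +∞, h attains its maximum on [0,∞) at some γ* > 0, and max_{γ ≥ 0} h(γ) = (1/(2(q−1)βc²)) · ( q (q−2)^{q−2} / (A^{q−2} B) )^{1/(q−1)}. -/
open Filter Topology

lemma aux14 (q β c A u s : ℝ) (hq : 2 < q) (hβ : 0 < β) (hc : 0 < c) (hA : 0 < A)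
    (hs : s * s = 2) (hs0 : 0 < s) :
    q / (β * c) * (u / (c * s)) / (q * s * A + q * s * A / (q - 2))
      = 1 / (2 * (q - 1) * β * c ^ 2) * ((q - 2) / A * u) := by
  have h1 : q - 2 ≠ 0 := by intro h; linarith
  have h2 : q - 1 ≠ 0 := by intro h; linarith
  have hq0 : q ≠ 0 := by intro h; linarith
  have e : q * s * A + q * s * A / (q - 2) = q * s * A * (q - 1) / (q - 2) := by
    field_simp; ring
  rw [e]
  field_simp
  linear_combination (-u) * hs

lemma aux15 (q A B P Q : ℝ) (h2 : q - 2 ≠ 0) (hA : A ≠ 0) (hB : B ≠ 0) (hQ : Q ≠ 0) :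
    P / Q * ((q - 2) / A) * (q * A / ((q - 2) * B)) = q * P / (Q * B) := by
  field_simp

/-- Let `q > 2` and `β, c, A, B > 0`, and let
`h(γ) = (q/(βc)) γ / (q√2 A + 2^(q/2) c^(q−1) B γ^(q−1))` for `γ ≥ 0` (so `h(0) = 0`).
Then `h(0) = 0`, `h(γ) → 0` as `γ → +∞`, `h` attains its maximum on `[0,∞)` at some
`γ* > 0`, and `max_{γ≥0} h(γ) = (1/(2(q−1)βc²)) (q (q−2)^(q−2) / (A^(q−2) B))^(1/(q−1))`. -/
theorem stmt_14 (q β c A B : ℝ) (hq : 2 < q) (hβ : 0 < β) (hc : 0 < c)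
    (hA : 0 < A) (hB : 0 < B) (h : ℝ → ℝ)
    (hdef : ∀ γ : ℝ, 0 ≤ γ →
      h γ = q / (β * c) * γ /
        (q * Real.sqrt 2 * A + 2 ^ (q / 2) * c ^ (q - 1) * B * γ ^ (q - 1))) :
    h 0 = 0 ∧
    Tendsto h atTop (𝓝 0) ∧
    ∃ γs : ℝ, 0 < γs ∧ (∀ γ : ℝ, 0 ≤ γ → h γ ≤ h γs) ∧
      h γs = 1 / (2 * (q - 1) * β * c ^ 2) *
        (q * (q - 2) ^ (q - 2) / (A ^ (q - 2) * B)) ^ (1 / (q - 1)) := by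
  have hq0 : 0 < q := by linarith
  have hp1 : (1:ℝ) < q - 1 := by linarith
  have hp0 : (0:ℝ) < q - 1 := by linarith
  have hp2 : (0:ℝ) < q - 2 := by linarith
  have hs2 : Real.sqrt 2 * Real.sqrt 2 = 2 := Real.mul_self_sqrt (by norm_num)
  have hs0 : (0:ℝ) < Real.sqrt 2 := Real.sqrt_pos.mpr (by norm_num)
  set K : ℝ := q / (β * c) with hK
  set a : ℝ := q * Real.sqrt 2 * A with ha'
  set b : ℝ := 2 ^ (q / 2) * c ^ (q - 1) * B with hb'
  have hK0 : 0 < K := div_pos hq0 (mul_pos hβ hc)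
  have ha : 0 < a := by positivity
  have hcq : (0:ℝ) < c ^ (q-1) := Real.rpow_pos_of_pos hc _
  have h2q : (0:ℝ) < 2 ^ (q/2) := Real.rpow_pos_of_pos (by norm_num) _
  have hb : 0 < b := by positivity
  -- the maximizer
  set γs : ℝ := (a / ((q - 2) * b)) ^ (q - 1)⁻¹ with hγs'
  have hx0 : 0 < a / ((q - 2) * b) := div_pos ha (mul_pos hp2 hb)
  have hγs : 0 < γs := Real.rpow_pos_of_pos hx0 _
  have hγsp : γs ^ (q - 1) = a / ((q - 2) * b) :=
    Real.rpow_inv_rpow hx0.le (ne_of_gt hp0)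
  have hkey : b * γs ^ (q - 1) = a / (q - 2) := by
    rw [hγsp]; field_simp
  have hden : ∀ γ : ℝ, 0 ≤ γ → 0 < a + b * γ ^ (q - 1) := by
    intro γ hγ
    have : 0 ≤ γ ^ (q - 1) := Real.rpow_nonneg hγ _
    nlinarith
  refine ⟨?_, ?_, γs, hγs, ?_, ?_⟩
  · -- h 0 = 0
    rw [hdef 0 le_rfl]; simp
  · -- tendsto 0
    have hub : ∀ᶠ γ : ℝ in atTop, h γ ≤ K / b * γ ^ (1 - (q - 1)) := by
      filter_upwards [eventually_ge_atTop (1:ℝ)] with γ hγ1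
      have hγ0 : (0:ℝ) < γ := by linarith
      rw [hdef γ hγ0.le]
      have hpow : (0:ℝ) < γ ^ (q - 1) := Real.rpow_pos_of_pos hγ0 _
      have he : K / b * γ ^ (1 - (q - 1)) = K * γ / (b * γ ^ (q - 1)) := by
        rw [Real.rpow_sub hγ0, Real.rpow_one]
        field_simp
      rw [he]
      refine (div_le_div_iff_of_pos_left (by positivity) (hden γ hγ0.le) (by positivity)).mpr ?_
      nlinarith
    have hlb : ∀ᶠ γ : ℝ in atTop, 0 ≤ h γ := by
      filter_upwards [eventually_ge_atTop (0:ℝ)] with γ hγ0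
      rw [hdef γ hγ0]
      have := hden γ hγ0
      positivity
    have hup : Tendsto (fun γ : ℝ => K / b * γ ^ (1 - (q - 1))) atTop (𝓝 0) := by
      have h1 : Tendsto (fun γ : ℝ => γ ^ (-(q - 2))) atTop (𝓝 0) :=
        tendsto_rpow_neg_atTop hp2
      have h2 : (fun γ : ℝ => K / b * γ ^ (1 - (q - 1)))
          = fun γ : ℝ => K / b * γ ^ (-(q - 2)) := by
        funext γ
        rw [show (1:ℝ) - (q - 1) = -(q - 2) by ring]
      rw [h2]
      simpa using h1.const_mul (K / b)
    exact tendsto_of_tendsto_of_tendsto_of_le_of_le' tendsto_const_nhds hup hlb hub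
  · -- maximality
    intro γ hγ
    rw [hdef γ hγ, hdef γs hγs.le]
    rw [div_le_div_iff₀ (hden γ hγ) (hden γs hγs.le)]
    set t : ℝ := γ / γs with ht'
    have ht0 : 0 ≤ t := div_nonneg hγ hγs.le
    have htγ : γ = t * γs := (div_mul_cancel₀ γ hγs.ne').symm
    have htp : γ ^ (q - 1) = t ^ (q - 1) * γs ^ (q - 1) := by
      rw [htγ, Real.mul_rpow ht0 hγs.le]
    have hbern : 1 + (q - 1) * (t - 1) ≤ t ^ (q - 1) := by
      have := one_add_mul_self_le_rpow_one_add (s := t - 1) (by linarith) hp1.le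
      have he : (1:ℝ) + (t - 1) = t := by ring
      rwa [he] at this
    have hd : a = a / (q - 2) * (q - 2) := by field_simp
    rw [htp, htγ]
    have hfac : 0 < γs * (a / (q - 2)) := mul_pos hγs (div_pos ha hp2)
    have hmul := mul_le_mul_of_nonneg_left hbern hfac.le
    calc K * (t * γs) * (a + b * γs ^ (q - 1))
        = K * ((t * γs) * (a + b * γs ^ (q - 1))) := by ring
      _ ≤ K * (γs * (a + b * (t ^ (q - 1) * γs ^ (q - 1)))) := by
          apply mul_le_mul_of_nonneg_left _ hK0.le
          have e1 : b * (t ^ (q - 1) * γs ^ (q - 1)) = t ^ (q - 1) * (a / (q - 2)) := by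
            rw [show b * (t ^ (q - 1) * γs ^ (q - 1)) = t ^ (q - 1) * (b * γs ^ (q - 1)) by ring,
              hkey]
          rw [e1, hkey]
          nlinarith [hmul, hd]
      _ = K * γs * (a + b * (t ^ (q - 1) * γs ^ (q - 1))) := by ring
  · -- value at γs
    rw [hdef γs hγs.le]
    set N : ℝ := q * A / ((q - 2) * B) with hN'
    have hN0 : 0 < N := div_pos (mul_pos hq0 hA) (mul_pos hp2 hB)
    have hsq : Real.sqrt 2 ^ (q - 1) = 2 ^ ((q - 1) / 2) := by
      rw [Real.sqrt_eq_rpow, ← Real.rpow_mul (by norm_num : (0:ℝ) ≤ 2)]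
      congr 1; ring
    have h2split : (2:ℝ) ^ (q / 2) = Real.sqrt 2 * 2 ^ ((q - 1) / 2) := by
      rw [Real.sqrt_eq_rpow, ← Real.rpow_add (by norm_num : (0:ℝ) < 2)]
      congr 1; ring
    have h2q1 : (0:ℝ) < 2 ^ ((q - 1)/2) := Real.rpow_pos_of_pos (by norm_num) _
    -- γs = N^(q-1)⁻¹ / (c * √2)
    have hg : γs = N ^ (q - 1)⁻¹ / (c * Real.sqrt 2) := by
      have hg0 : (0:ℝ) ≤ N ^ (q - 1)⁻¹ / (c * Real.sqrt 2) := by positivity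
      have hgp : (N ^ (q - 1)⁻¹ / (c * Real.sqrt 2)) ^ (q - 1) = a / ((q - 2) * b) := by
        rw [Real.div_rpow (by positivity) (by positivity),
          Real.rpow_inv_rpow hN0.le (ne_of_gt hp0),
          Real.mul_rpow hc.le hs0.le, hsq, hN', ha', hb', h2split]
        field_simp
      rw [hγs', ← hgp, Real.rpow_rpow_inv hg0 (ne_of_gt hp0)]
    -- key rpow identity
    have hL : (q - 2) / A * N ^ (q - 1)⁻¹
        = (q * (q - 2) ^ (q - 2) / (A ^ (q - 2) * B)) ^ (q - 1)⁻¹ := by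
      have hXpos : (0:ℝ) < (q - 2) / A := div_pos hp2 hA
      have hX : (q - 2) / A = (((q - 2) / A) ^ (q - 1)) ^ (q - 1)⁻¹ :=
        (Real.rpow_rpow_inv hXpos.le (ne_of_gt hp0)).symm
      rw [hX, ← Real.mul_rpow (Real.rpow_nonneg hXpos.le _) hN0.le]
      congr 1
      have e1 : ((q - 2) / A) ^ (q - 1) = ((q - 2) / A) ^ (q - 2) * ((q - 2) / A) := by
        rw [show q - 1 = (q - 2) + 1 by ring, Real.rpow_add hXpos, Real.rpow_one]
      rw [e1, Real.div_rpow hp2.le hA.le, hN']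
      have hAq : (0:ℝ) < A ^ (q - 2) := Real.rpow_pos_of_pos hA _
      rw [show q * (q - 2) ^ (q - 2) / (A ^ (q - 2) * B)
          = q * (q - 2) ^ (q - 2) / (A ^ (q - 2) * B) from rfl]
      exact aux15 q A B ((q - 2) ^ (q - 2)) (A ^ (q - 2)) (ne_of_gt hp2) hA.ne' hB.ne' hAq.ne'
    -- final computation
    rw [hkey, hg]
    rw [show (1:ℝ) / (q - 1) = (q - 1)⁻¹ from one_div _, ← hL, hK, ha']
    exact aux14 q β c A (N ^ (q - 1)⁻¹) (Real.sqrt 2) hq hβ hc hA hs2 hs0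
end

section
/- Let q > 2 and β, c, A, B be positive real numbers, and set λ_⋆ := (1/(2(q−1)βc²)) · ( q (q−2)^{q−2} / (A^{q−2} B) )^{1/(q−1)}. Then for every λ ∈ (0, λ_⋆) there exists γ̄ > 0 such that c·β·( √2·A/γ̄ + (2^{q/2} c^{q−1} / q)·B·γ̄^{q−2} ) < 1/λ. -/
/-- Let `q > 2`, `β, c, A, B > 0` and
`λ⋆ = (1/(2(q−1)βc²)) (q (q−2)^(q−2) / (A^(q−2) B))^(1/(q−1))`. Then for every
`λ ∈ (0, λ⋆)` there exists `γ̄ > 0` with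
`c β (√2 A/γ̄ + (2^(q/2) c^(q−1)/q) B γ̄^(q−2)) < 1/λ`. -/
theorem stmt_15 (q β c A B : ℝ) (hq : 2 < q) (hβ : 0 < β) (hc : 0 < c)
    (hA : 0 < A) (hB : 0 < B) (lam : ℝ) (hlam : 0 < lam)
    (hlt : lam < 1 / (2 * (q - 1) * β * c ^ 2) *
      (q * (q - 2) ^ (q - 2) / (A ^ (q - 2) * B)) ^ (1 / (q - 1))) :
    ∃ γ : ℝ, 0 < γ ∧
      c * β * (Real.sqrt 2 * A / γ + 2 ^ (q / 2) * c ^ (q - 1) / q * B * γ ^ (q - 2)) <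
        1 / lam := by
  have hq0 : 0 < q := by linarith
  set s : ℝ := q - 2 with hs_def
  set t : ℝ := q - 1 with ht_def
  have hs : 0 < s := by simp [hs_def]; linarith
  have ht : 0 < t := by simp [ht_def]; linarith
  have ht0 : t ≠ 0 := ne_of_gt ht
  have hbase : 0 < q * A / (s * B) := by positivity
  set X : ℝ := (q * A / (s * B)) ^ (1 / t : ℝ) with hX_def
  have hXpos : 0 < X := Real.rpow_pos_of_pos hbase _
  have hXt : X ^ (t : ℝ) = q * A / (s * B) := by
    rw [hX_def, one_div]
    exact Real.rpow_inv_rpow hbase.le ht0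
  have hsqrt2 : (0:ℝ) < Real.sqrt 2 := by positivity
  refine ⟨X / (Real.sqrt 2 * c), by positivity, ?_⟩
  set γ : ℝ := X / (Real.sqrt 2 * c) with hγ_def
  have hγ : 0 < γ := by positivity
  -- compute γ ^ s
  have hγs : γ ^ (s : ℝ) = X ^ (s : ℝ) / ((2:ℝ) ^ (s/2 : ℝ) * c ^ (s : ℝ)) := by
    rw [hγ_def, Real.div_rpow hXpos.le (by positivity),
      Real.mul_rpow hsqrt2.le hc.le, Real.sqrt_eq_rpow,
      show (s/2 : ℝ) = (1/2) * s by ring, Real.rpow_mul (by norm_num)]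
  have hXs : X ^ (s : ℝ) = (q * A / (s * B)) / X := by
    have hst : (s : ℝ) = t - 1 := by rw [hs_def, ht_def]; ring
    rw [show X ^ (s : ℝ) = X ^ (t - 1 : ℝ) from by rw [hst],
      Real.rpow_sub hXpos, Real.rpow_one, hXt]
  -- key simplification of the bracket
  have hE : Real.sqrt 2 * A / γ + 2 ^ (q / 2) * c ^ (q - 1) / q * B * γ ^ (q - 2)
      = 2 * A * c * t / (s * X) := by
    have h1 : Real.sqrt 2 * A / γ = 2 * A * c / X := by
      rw [hγ_def, div_div_eq_mul_div]
      rw [show Real.sqrt 2 * A * (Real.sqrt 2 * c) = (Real.sqrt 2 * Real.sqrt 2) * (A * c) by ring,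
        Real.mul_self_sqrt (by norm_num)]
      ring
    have h2q : (2:ℝ) ^ (q/2 : ℝ) = 2 * (2:ℝ) ^ (s/2 : ℝ) := by
      have : (q/2 : ℝ) = 1 + s/2 := by rw [hs_def]; ring
      rw [this, Real.rpow_add (by norm_num), Real.rpow_one]
    have h2c : (c:ℝ) ^ (q - 1 : ℝ) = c * c ^ (s : ℝ) := by
      have : (q - 1 : ℝ) = 1 + s := by rw [hs_def]; ring
      rw [this, Real.rpow_add hc, Real.rpow_one]
    have h2 : 2 ^ (q / 2) * c ^ (q - 1) / q * B * γ ^ (q - 2)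
        = 2 * A * c / (s * X) := by
      rw [show (q - 2 : ℝ) = s by rw [hs_def], hγs, hXs, h2q, h2c]
      have hcs : (0:ℝ) < c ^ (s : ℝ) := Real.rpow_pos_of_pos hc _
      have h2s : (0:ℝ) < (2:ℝ) ^ (s/2 : ℝ) := by positivity
      field_simp
    rw [show (q - 2 : ℝ) = s by rw [hs_def], h1, h2]
    field_simp
    rw [ht_def, hs_def]; ring
  rw [hE]
  -- identity for λ⋆
  have hId : (q * s ^ (s:ℝ) / (A ^ (s:ℝ) * B)) ^ (1 / t : ℝ) = s * X / A := by
    have hY : (0:ℝ) ≤ s * X / A := by positivity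
    have hYt : (s * X / A) ^ (t : ℝ) = q * s ^ (s:ℝ) / (A ^ (s:ℝ) * B) := by
      rw [Real.div_rpow (by positivity) hA.le, Real.mul_rpow hs.le hXpos.le, hXt]
      have hst : s ^ (t:ℝ) = s ^ (s:ℝ) * s := by
        rw [show (t:ℝ) = s + 1 by rw [ht_def, hs_def]; ring, Real.rpow_add hs, Real.rpow_one]
      have hAt : A ^ (t:ℝ) = A ^ (s:ℝ) * A := by
        rw [show (t:ℝ) = s + 1 by rw [ht_def, hs_def]; ring, Real.rpow_add hA, Real.rpow_one]
      rw [hst, hAt]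
      have hss : (0:ℝ) < s ^ (s:ℝ) := Real.rpow_pos_of_pos hs _
      have hAs : (0:ℝ) < A ^ (s:ℝ) := Real.rpow_pos_of_pos hA _
      field_simp
    rw [← hYt, one_div, Real.rpow_rpow_inv hY ht0]
  rw [hId] at hlt
  have hD : (0:ℝ) < s * X / (2 * t * β * c ^ 2 * A) := by positivity
  have hlt' : lam < s * X / (2 * t * β * c ^ 2 * A) := by
    calc lam < 1 / (2 * t * β * c ^ 2) * (s * X / A) := hlt
    _ = s * X / (2 * t * β * c ^ 2 * A) := by field_simp
  have h1 : 1 / (s * X / (2 * t * β * c ^ 2 * A)) < 1 / lam :=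
    one_div_lt_one_div_of_lt hlam hlt'
  calc c * β * (2 * A * c * t / (s * X))
      = 1 / (s * X / (2 * t * β * c ^ 2 * A)) := by
        rw [one_div_div]; field_simp
    _ < 1 / lam := h1
end

section
/- Let (X, μ) be a measure space and let S' ⊆ S be measurable subsets of X with μ(S) < +∞ and μ(S') > 0. Let α : X → [0,∞) be measurable and essentially bounded with α ≥ α₀ almost everywhere on S' for some α₀ > 0. Let w : X → ℝ be measurable with 0 ≤ w ≤ 1 everywhere, w = 1 almost everywhere on S', and w = 0 almost everywhere on X ∖ S. Let F : [0,∞) → ℝ be continuous with F(0) = 0, liminf_{t→0⁺} F(t)/t² > −∞ and limsup_{t→0⁺} F(t)/t² = +∞. Then limsup_{t→0⁺} (1/t²) ∫_X α(σ) F(t·w(σ)) dμ = +∞. -/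
open MeasureTheory Filter Topology
open scoped ENNReal NNReal

/-- On a measure space `(X, μ)` with measurable `S' ⊆ S`,
`μ(S) < ∞`, `μ(S') > 0`, `α ≥ 0` measurable essentially bounded with `α ≥ α₀ > 0`
a.e. on `S'`, `w` measurable with `0 ≤ w ≤ 1`, `w = 1` a.e. on `S'`, `w = 0` a.e. on
`X ∖ S`, and `F : [0,∞) → ℝ` continuous with `F(0) = 0`,
`liminf_{t→0⁺} F(t)/t² > −∞` and `limsup_{t→0⁺} F(t)/t² = +∞`: then
`limsup_{t→0⁺} (1/t²) ∫ α F(t w) dμ = +∞`. -/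
theorem stmt_17 {X : Type*} [MeasurableSpace X] (μ : Measure X)
    (S S' : Set X) (hS : MeasurableSet S) (hS' : MeasurableSet S') (hsub : S' ⊆ S)
    (hSfin : μ S < ⊤) (hS'pos : 0 < μ S')
    (α : X → ℝ) (hα_meas : Measurable α) (hα_nonneg : ∀ σ, 0 ≤ α σ)
    (hα_top : MemLp α ⊤ μ)
    (α₀ : ℝ) (hα₀ : 0 < α₀) (hα_lb : ∀ᵐ σ ∂(μ.restrict S'), α₀ ≤ α σ)
    (w : X → ℝ) (hw_meas : Measurable w) (hw01 : ∀ σ, 0 ≤ w σ ∧ w σ ≤ 1)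
    (hwS' : ∀ᵐ σ ∂(μ.restrict S'), w σ = 1)
    (hwout : ∀ᵐ σ ∂(μ.restrict Sᶜ), w σ = 0)
    (F : ℝ → ℝ) (hF_cont : ContinuousOn F (Set.Ici 0)) (hF0 : F 0 = 0)
    (hliminf : ∃ m : ℝ, ∀ᶠ t in 𝓝[>] (0 : ℝ), m ≤ F t / t ^ 2)
    (hlimsup : ∀ M : ℝ, ∃ᶠ t in 𝓝[>] (0 : ℝ), M < F t / t ^ 2) :
    ∀ M : ℝ, ∃ᶠ t in 𝓝[>] (0 : ℝ), M < 1 / t ^ 2 * ∫ σ, α σ * F (t * w σ) ∂μ := by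
  intro M
  -- essential sup bound on α
  set A : ℝ := (eLpNormEssSup α μ).toReal with hAdef
  have hAfin : eLpNormEssSup α μ < ⊤ := by
    have := hα_top.2
    rwa [eLpNorm_exponent_top] at this
  have hA : ∀ᵐ σ ∂μ, α σ ≤ A := by
    filter_upwards [ae_le_eLpNormEssSup (f := α) (μ := μ)] with σ hσ
    have h1 : ((‖α σ‖₊ : ℝ≥0∞)).toReal ≤ A := ENNReal.toReal_mono hAfin.ne hσ
    calc α σ ≤ |α σ| := le_abs_self _
    _ = ((‖α σ‖₊ : ℝ≥0∞)).toReal := by simp [Real.norm_eq_abs]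
    _ ≤ A := h1
  have hA0 : 0 ≤ A := ENNReal.toReal_nonneg
  -- the extended function G
  set G : ℝ → ℝ := fun s => F (max 0 s) with hGdef
  have hGcont : Continuous G :=
    hF_cont.comp_continuous (continuous_const.max continuous_id)
      (fun x => Set.mem_Ici.2 (le_max_left 0 x))
  have hGF : ∀ s, 0 ≤ s → G s = F s := fun s hs => by
    simp only [hGdef, max_eq_right hs]
  have hG0 : G 0 = 0 := by simpa using (hGF 0 le_rfl).trans hF0
  -- liminf bound
  obtain ⟨m₀, hm₀⟩ := hliminf
  set m : ℝ := min m₀ 0 with hmdef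
  have hm_nonpos : m ≤ 0 := min_le_right _ _
  have hm_ev : ∀ᶠ t in 𝓝[>] (0 : ℝ), m ≤ F t / t ^ 2 :=
    hm₀.mono fun t ht => le_trans (min_le_left _ _) ht
  obtain ⟨δ, hδ0, hδsub⟩ := mem_nhdsGT_iff_exists_Ioo_subset.1 hm_ev
  have hδ0' : (0:ℝ) < δ := hδ0
  -- bound for G on [0, δ]
  obtain ⟨K, hK⟩ := (isCompact_Icc : IsCompact (Set.Icc (0:ℝ) δ)).exists_bound_of_continuousOn
    hGcont.continuousOn
  -- measures as reals
  have hS'fin : μ S' < ⊤ := lt_of_le_of_lt (measure_mono hsub) hSfin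
  set P : ℝ := (μ S').toReal with hPdef
  have hP : 0 < P := ENNReal.toReal_pos hS'pos.ne' hS'fin.ne
  set B : ℝ := (μ S).toReal with hBdef
  -- the threshold
  set M' : ℝ := max 0 ((M - m * A * B + 1) / (α₀ * P)) with hM'def
  have hM'0 : 0 ≤ M' := le_max_left _ _
  have hα₀P : 0 < α₀ * P := by positivity
  have hM'key : M - m * A * B + 1 ≤ M' * (α₀ * P) :=
    (div_le_iff₀ hα₀P).1 (le_max_right _ _)
  have hwout' : ∀ᵐ σ ∂μ, σ ∈ Sᶜ → w σ = 0 := (ae_restrict_iff' hS.compl).1 hwout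
  -- the frequent set of parameters
  have hIoo : Set.Ioo (0:ℝ) δ ∈ 𝓝[>] (0:ℝ) :=
    Ioo_mem_nhdsGT hδ0'
  refine ((hlimsup M').and_eventually (eventually_of_mem hIoo fun t ht => ht)).mono ?_
  rintro t ⟨hM't, ht0, htδ⟩
  have ht2 : (0:ℝ) < t ^ 2 := by positivity
  have hFtdiv : 0 < F t / t ^ 2 := lt_of_le_of_lt hM'0 hM't
  have hFt : 0 < F t := by
    have := mul_pos hFtdiv ht2
    rwa [div_mul_cancel₀ _ ht2.ne'] at this
  -- the integrand
  set g : X → ℝ := fun σ => α σ * G (t * w σ) with hgdef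
  have hgF : (fun σ => α σ * F (t * w σ)) = g := by
    funext σ
    rw [hgdef]
    simp only
    rw [hGF _ (mul_nonneg ht0.le (hw01 σ).1)]
  have hgmeas : Measurable g := hα_meas.mul (hGcont.measurable.comp (measurable_const.mul hw_meas))
  have hK0 : 0 ≤ K := le_trans (norm_nonneg (G 0)) (hK 0 ⟨le_refl 0, hδ0'.le⟩)
  have htw_mem : ∀ σ, t * w σ ∈ Set.Icc 0 δ := by
    intro σ
    obtain ⟨hw0, hw1⟩ := hw01 σ
    constructor
    · exact mul_nonneg ht0.le hw0
    · nlinarith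
  have hDint : Integrable (S.indicator fun _ => A * K) μ :=
    (integrable_indicator_iff hS).2 (integrableOn_const hSfin.ne)
  have hgbound : ∀ᵐ σ ∂μ, ‖g σ‖ ≤ S.indicator (fun _ => A * K) σ := by
    filter_upwards [hA, hwout'] with σ hAσ hwσ
    by_cases hσ : σ ∈ S
    · rw [Set.indicator_of_mem hσ]
      have h1 : ‖g σ‖ = |α σ| * ‖G (t * w σ)‖ := by
        rw [hgdef]; simp [Real.norm_eq_abs, abs_mul]
      rw [h1]
      have hαabs : |α σ| ≤ A := by rwa [abs_of_nonneg (hα_nonneg σ)]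
      exact mul_le_mul hαabs (hK _ (htw_mem σ)) (norm_nonneg _) hA0
    · rw [Set.indicator_of_notMem hσ]
      have hw0 : w σ = 0 := hwσ hσ
      have : g σ = 0 := by rw [hgdef]; simp [hw0, hG0]
      simp [this]
  have hgint : Integrable g μ := hDint.mono' hgmeas.aestronglyMeasurable hgbound
  have hsplit : ∫ σ, g σ ∂μ = (∫ σ in S', g σ ∂μ) + ∫ σ in S'ᶜ, g σ ∂μ :=
    (integral_add_compl hS' hgint).symm
  -- estimate on S'
  have h1 : α₀ * F t * P ≤ ∫ σ in S', g σ ∂μ := by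
    have hconst : Integrable (fun _ => α₀ * F t) (μ.restrict S') :=
      integrableOn_const hS'fin.ne
    have hle : (fun _ => α₀ * F t) ≤ᵐ[μ.restrict S'] g := by
      filter_upwards [hα_lb, hwS'] with σ h₁ h₂
      rw [hgdef]
      simp only
      rw [h₂, mul_one, hGF t ht0.le]
      exact mul_le_mul_of_nonneg_right h₁ hFt.le
    calc α₀ * F t * P = (μ S').toReal • (α₀ * F t) := by rw [smul_eq_mul]; ring
    _ = ∫ _ in S', (α₀ * F t) ∂μ := (setIntegral_const _).symm
    _ ≤ ∫ σ in S', g σ ∂μ := integral_mono_ae hconst hgint.restrict hle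
  -- estimate on S'ᶜ
  have hmt2 : m * t ^ 2 ≤ 0 := mul_nonpos_iff.2 (Or.inr ⟨hm_nonpos, ht2.le⟩)
  set c : ℝ := m * t ^ 2 * A with hcdef
  have hc0 : c ≤ 0 := mul_nonpos_iff.2 (Or.inr ⟨hmt2, hA0⟩)
  have h2 : m * t ^ 2 * A * B ≤ ∫ σ in S'ᶜ, g σ ∂μ := by
    have hφint : Integrable (S.indicator fun _ => c) (μ.restrict S'ᶜ) :=
      ((integrable_indicator_iff hS).2 (integrableOn_const hSfin.ne)).restrict
    have hφle : (S.indicator fun _ => c) ≤ᵐ[μ.restrict S'ᶜ] g := by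
      filter_upwards [ae_restrict_of_ae hA, ae_restrict_of_ae hwout'] with σ h₁ h₂
      by_cases hσ : σ ∈ S
      · rw [Set.indicator_of_mem hσ]
        obtain ⟨hw0, hw1⟩ := hw01 σ
        have htw0 : 0 ≤ t * w σ := mul_nonneg ht0.le hw0
        have hFlb : m * t ^ 2 ≤ G (t * w σ) := by
          rcases eq_or_lt_of_le htw0 with h | h
          · rw [← h, hG0]; exact hmt2
          · have hlt : t * w σ < δ := lt_of_le_of_lt (by nlinarith) htδ
            have hdiv := hδsub ⟨h, hlt⟩
            have h2' : m * (t * w σ) ^ 2 ≤ F (t * w σ) :=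
              (le_div_iff₀ (by positivity)).1 hdiv
            rw [hGF _ htw0]
            have hw2 : w σ ^ 2 ≤ 1 := by nlinarith
            have hsq : (t * w σ) ^ 2 ≤ t ^ 2 := by
              have h5 := mul_le_mul_of_nonneg_left hw2 ht2.le
              calc (t * w σ) ^ 2 = t ^ 2 * w σ ^ 2 := by ring
              _ ≤ t ^ 2 * 1 := h5
              _ = t ^ 2 := mul_one _
            have hmm := mul_le_mul_of_nonpos_left hsq hm_nonpos
            linarith
        have s1 : α σ * (m * t ^ 2) ≤ α σ * G (t * w σ) :=
          mul_le_mul_of_nonneg_left hFlb (hα_nonneg σ)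
        have s2 : A * (m * t ^ 2) ≤ α σ * (m * t ^ 2) :=
          mul_le_mul_of_nonpos_right h₁ hmt2
        calc c = A * (m * t ^ 2) := by rw [hcdef]; ring
        _ ≤ α σ * (m * t ^ 2) := s2
        _ ≤ α σ * G (t * w σ) := s1
        _ = g σ := rfl
      · rw [Set.indicator_of_notMem hσ]
        have hw0 : w σ = 0 := h₂ hσ
        have : g σ = 0 := by rw [hgdef]; simp [hw0, hG0]
        rw [this]
    have hR : ((μ.restrict S'ᶜ) S).toReal ≤ B := by
      rw [Measure.restrict_apply hS]
      exact ENNReal.toReal_mono hSfin.ne (measure_mono Set.inter_subset_left)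
    calc m * t ^ 2 * A * B = c * B := by rw [hcdef]
    _ ≤ c * ((μ.restrict S'ᶜ) S).toReal := mul_le_mul_of_nonpos_left hR hc0
    _ = ((μ.restrict S'ᶜ) S).toReal • c := by rw [smul_eq_mul]; ring
    _ = ∫ σ in S'ᶜ, (S.indicator fun _ => c) σ ∂μ := (integral_indicator_const c hS).symm
    _ ≤ ∫ σ in S'ᶜ, g σ ∂μ := integral_mono_ae hφint hgint.restrict hφle
  -- combine
  have htotal : α₀ * F t * P + m * t ^ 2 * A * B ≤ ∫ σ, g σ ∂μ := by
    rw [hsplit]; exact add_le_add h1 h2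
  have key : α₀ * P * (F t / t ^ 2) + m * A * B ≤ 1 / t ^ 2 * ∫ σ, g σ ∂μ := by
    have heq : α₀ * P * (F t / t ^ 2) + m * A * B
        = 1 / t ^ 2 * (α₀ * F t * P + m * t ^ 2 * A * B) := by
      field_simp
    rw [heq]
    exact mul_le_mul_of_nonneg_left htotal (by positivity)
  have hstep : M - m * A * B + 1 < α₀ * P * (F t / t ^ 2) := by
    have h3 : M' * (α₀ * P) < F t / t ^ 2 * (α₀ * P) := mul_lt_mul_of_pos_right hM't hα₀P
    have h4 : F t / t ^ 2 * (α₀ * P) = α₀ * P * (F t / t ^ 2) := by ring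
    linarith
  rw [hgF]
  linarith
end
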